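/- arXiv:2305.13505 — 3 statements merged into one kernel-verified Lean document; each statement's English description precedes it below -/
import Mathlib

section
/- Let X and E be separable complete metric spaces, with X non-empty, and let D = {x₁,x₂,…} be a fixed enumeration of a countable dense subset of X. Then either X coarsely embeds into E, or the relation < is well-founded on Coa(D,E) and rk(Coa(D,E), <) is a countable ordinal. -/
open Filter Set Topology
open scoped ENNReal

noncomputable section

/-! ### Metric notions of embeddability -/

/-- A coarse embedding between (pseudo)metric spaces. -/
def CoarseEmbeddingMap {X E : Type*} [PseudoMetricSpace X] [PseudoMetricSpace E]
    (f : X → E) : Prop :=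
  ∃ κ ω : ℝ → ℝ,
    MonotoneOn κ (Set.Ici 0) ∧ MonotoneOn ω (Set.Ici 0) ∧
    (∀ t : ℝ, 0 ≤ t → 0 ≤ κ t ∧ 0 ≤ ω t) ∧
    Filter.Tendsto κ Filter.atTop Filter.atTop ∧
    ∀ x y : X, κ (dist x y) ≤ dist (f x) (f y) ∧ dist (f x) (f y) ≤ ω (dist x y)

/-- A uniform embedding between (pseudo)metric spaces. -/
def UniformEmbeddingMapNL {X E : Type*} [PseudoMetricSpace X] [PseudoMetricSpace E]
    (f : X → E) : Prop :=
  ∃ κ ω : ℝ → ℝ,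
    MonotoneOn κ (Set.Ici 0) ∧ MonotoneOn ω (Set.Ici 0) ∧
    (∀ t : ℝ, 0 ≤ t → 0 ≤ κ t ∧ 0 ≤ ω t) ∧
    (∀ t : ℝ, 0 < t → 0 < κ t) ∧
    Filter.Tendsto ω (nhdsWithin 0 (Set.Ioi 0)) (nhds 0) ∧
    ∀ x y : X, κ (dist x y) ≤ dist (f x) (f y) ∧ dist (f x) (f y) ≤ ω (dist x y)

/-- A bi-Lipschitz embedding between (pseudo)metric spaces. -/
def BiLipschitzEmbeddingMap {X E : Type*} [PseudoMetricSpace X] [PseudoMetricSpace E]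
    (f : X → E) : Prop :=
  ∃ c C : ℝ, 0 < c ∧ c ≤ C ∧
    ∀ x y : X, c * dist x y ≤ dist (f x) (f y) ∧ dist (f x) (f y) ≤ C * dist x y

/-! ### The set `𝒵`, functional moduli and the classes `M_coarse`, `M_uniform`, `M_Lipschitz` -/

/-- The set `𝒵 = {…,1/3,1/2,1,2,3,…} ⊆ (0,∞)`. -/
def Zset : Set ℝ := {r | ∃ n : ℕ, 1 ≤ n ∧ (r = n ∨ r = 1 / n)}

/-- Membership in `𝒩`: a non-decreasing `[0,∞]`-valued modulus on `𝒵` (values outside of `𝒵`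
are irrelevant dummy values). -/
def Nmod (κ : ℝ → ℝ≥0∞) : Prop := MonotoneOn κ Zset

/-- `t₋`: the largest element of `𝒵` below a real `t > 0`. -/
def tminus (t : ℝ) : ℝ := if 1 ≤ t then (⌊t⌋ : ℝ) else 1 / (⌈1 / t⌉ : ℝ)

/-- `t₊`: the smallest element of `𝒵` above a real `t > 0`. -/
def tplus (t : ℝ) : ℝ := if 1 ≤ t then (⌈t⌉ : ℝ) else 1 / (⌊1 / t⌋ : ℝ)

/-- The pair `(κ, ω)` belongs to `M_coarse`. -/
def Mcoarse (κ ω : ℝ → ℝ≥0∞) : Prop :=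
  (∀ r ∈ Zset, ω r < ⊤) ∧ Filter.Tendsto (fun n : ℕ => κ n) Filter.atTop (nhds ⊤)

/-- The pair `(κ, ω)` belongs to `M_uniform`. -/
def Muniform (κ ω : ℝ → ℝ≥0∞) : Prop :=
  (∀ r ∈ Zset, 0 < κ r) ∧
    Filter.Tendsto (fun n : ℕ => ω (1 / (n + 1 : ℝ))) Filter.atTop (nhds 0)

/-- The pair `(κ, ω)` belongs to `M_Lipschitz`. -/
def MLipschitz (κ ω : ℝ → ℝ≥0∞) : Prop :=
  ∃ c C : ℝ, 0 < c ∧ c < C ∧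
    ∀ r ∈ Zset, ENNReal.ofReal (c * r) ≤ κ r ∧ ω r ≤ ENNReal.ofReal (C * r)

/-! ### Ill-foundedness and ranks of binary relations restricted to subsets -/

/-- The relation `r` is ill-founded on the subset `S`. -/
def IllFoundedOn {A : Type*} (r : A → A → Prop) (S : Set A) : Prop :=
  ∃ a : ℕ → A, (∀ n, a n ∈ S) ∧ ∀ n, r (a (n + 1)) (a n)

/-- The rank `rk(S, r)` of a relation `r`, well-founded on a subset `S`. -/
def relRankOn {A : Type*} (r : A → A → Prop) (S : Set A)
    (h : WellFounded fun a b : S => r a b) : Ordinal :=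
  ⨆ a : S, Order.succ (h.apply a).rank

/-! ### The simple embeddability ranks -/

/-- A quadruple `(κ, ω, k, φ)` as in the definition of `Ω(D,E)`; the countable dense set `D` is
given by an enumeration `x : ℕ → X` and `φ : D → E` is represented by the map on indices. -/
structure Quad (E : Type*) where
  kappa : ℝ → ℝ≥0∞
  omega : ℝ → ℝ≥0∞
  k : ℕ
  phi : ℕ → E

/-- The set `Ω(D,E)` where `D` is enumerated by `x : ℕ → X`. -/
def OmegaSet {X E : Type*} [MetricSpace X] [MetricSpace E] (x : ℕ → X) : Set (Quad E) :=
  {q | Nmod q.kappa ∧ Nmod q.omega ∧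
    (∀ i j : ℕ, x i = x j → q.phi i = q.phi j) ∧
    ∀ i < q.k, ∀ j < q.k, x i ≠ x j →
      q.kappa (tminus (dist (x i) (x j))) ≤ edist (q.phi i) (q.phi j) ∧
      edist (q.phi i) (q.phi j) ≤ q.omega (tplus (dist (x i) (x j)))}

/-- The set `Coa(D,E)`. -/
def CoaSet {X E : Type*} [MetricSpace X] [MetricSpace E] (x : ℕ → X) : Set (Quad E) :=
  {q ∈ OmegaSet x | Mcoarse q.kappa q.omega}

/-- The set `Uni(D,E)`. -/
def UniSet {X E : Type*} [MetricSpace X] [MetricSpace E] (x : ℕ → X) : Set (Quad E) :=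
  {q ∈ OmegaSet x | Muniform q.kappa q.omega}

/-- The set `Lip(D,E)`. -/
def LipSet {X E : Type*} [MetricSpace X] [MetricSpace E] (x : ℕ → X) : Set (Quad E) :=
  {q ∈ OmegaSet x | MLipschitz q.kappa q.omega}

/-- The relation `<` on `Ω(D,E)`. -/
def QuadRel {E : Type*} (p q : Quad E) : Prop :=
  p.kappa = q.kappa ∧ p.omega = q.omega ∧ p.k = q.k + 1 ∧ ∀ i < q.k, p.phi i = q.phi i

/-! ### Embeddability ranks based on Schauder bases -/

/-- The copy of `ℤ` inside `ℝ`. -/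
def ZR : Set ℝ := Set.range ((↑) : ℤ → ℝ)

/-- The copy of `ℚ` inside `ℝ`. -/
def QR : Set ℝ := Set.range ((↑) : ℚ → ℝ)

/-- `R[A]`: the set of `R`-linear combinations of the vectors `e i`, `i ∈ A`. -/
def RComb {X : Type*} [NormedAddCommGroup X] [Module ℝ X] (R : Set ℝ) (e : ℕ → X)
    (A : Finset ℕ) : Set X :=
  {x | ∃ c : ℕ → ℝ, (∀ i, c i ∈ R) ∧ x = ∑ i ∈ A, c i • e i}

/-- `R[e₁,e₂,…]`: the set of all finite `R`-linear combinations of the vectors `e i`. -/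
def RCombAll {X : Type*} [NormedAddCommGroup X] [Module ℝ X] (R : Set ℝ) (e : ℕ → X) : Set X :=
  ⋃ A : Finset ℕ, RComb R e A

/-- `A ≺* B` for finite subsets of `ℕ`: `A` is obtained from `B` by adding one element larger
than all elements of `B`. -/
def PrecStar (A B : Finset ℕ) : Prop := ∃ m : ℕ, (∀ b ∈ B, b < m) ∧ A = insert m B

/-- A quadruple `(κ, ω, A, φ)` as in the definition of `Θ(R,(eₙ),E)`; the finite subset `A` of
`{e₁,e₂,…}` is recorded by the finite set of indices, and `φ` (a map on `R[e₁,e₂,…]`) is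
represented by a map on `X` (only its values on `R`-linear combinations are ever relevant). -/
structure QuadF (X E : Type*) where
  kappa : ℝ → ℝ≥0∞
  omega : ℝ → ℝ≥0∞
  A : Finset ℕ
  phi : X → E

/-- The set `Θ(R,(eₙ),E)`. -/
def ThetaSet {X E : Type*} [NormedAddCommGroup X] [Module ℝ X] [MetricSpace E]
    (R : Set ℝ) (e : ℕ → X) : Set (QuadF X E) :=
  {q | Nmod q.kappa ∧ Nmod q.omega ∧
    ∀ x ∈ RComb R e q.A, ∀ y ∈ RComb R e q.A, x ≠ y →
      q.kappa (tminus (dist x y)) ≤ edist (q.phi x) (q.phi y) ∧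
      edist (q.phi x) (q.phi y) ≤ q.omega (tplus (dist x y))}

/-- The set `Coa(R,(eₙ),E)`. -/
def CoaTheta {X E : Type*} [NormedAddCommGroup X] [Module ℝ X] [MetricSpace E]
    (R : Set ℝ) (e : ℕ → X) : Set (QuadF X E) :=
  {q ∈ ThetaSet R e | Mcoarse q.kappa q.omega}

/-- The set `Uni(R,(eₙ),E)`. -/
def UniTheta {X E : Type*} [NormedAddCommGroup X] [Module ℝ X] [MetricSpace E]
    (R : Set ℝ) (e : ℕ → X) : Set (QuadF X E) :=
  {q ∈ ThetaSet R e | Muniform q.kappa q.omega}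

/-- The set `Lip(R,(eₙ),E)`. -/
def LipTheta {X E : Type*} [NormedAddCommGroup X] [Module ℝ X] [MetricSpace E]
    (R : Set ℝ) (e : ℕ → X) : Set (QuadF X E) :=
  {q ∈ ThetaSet R e | MLipschitz q.kappa q.omega}

/-- The relation `<` on `Θ(R,(eₙ),E)`. -/
def QuadFRel {X E : Type*} [NormedAddCommGroup X] [Module ℝ X]
    (R : Set ℝ) (e : ℕ → X) (p q : QuadF X E) : Prop :=
  p.kappa = q.kappa ∧ p.omega = q.omega ∧ PrecStar p.A q.A ∧
    ∀ x ∈ RComb R e q.A, p.phi x = q.phi x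

/-! ### Schauder bases, basic sequences, subsymmetric bases -/

/-- `(eₙ)` is a Schauder basis of the subset `S`: every element of `S` has a unique
norm-convergent expansion. -/
def IsSchauderBasisOf {X : Type*} [NormedAddCommGroup X] [Module ℝ X] (e : ℕ → X)
    (S : Set X) : Prop :=
  ∀ x ∈ S, ∃! a : ℕ → ℝ,
    Filter.Tendsto (fun N => ∑ i ∈ Finset.range N, a i • e i) Filter.atTop (nhds x)

/-- `(eₙ)` is a Schauder basis of the whole space `X`. -/
def IsSchauderBasis {X : Type*} [NormedAddCommGroup X] [Module ℝ X] (e : ℕ → X) : Prop :=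
  IsSchauderBasisOf e Set.univ

/-- `(eₙ)` is a basic sequence: it is a Schauder basis of its closed linear span. -/
def IsBasicSequence {X : Type*} [NormedAddCommGroup X] [Module ℝ X] (e : ℕ → X) : Prop :=
  IsSchauderBasisOf e (closure (Submodule.span ℝ (Set.range e) : Set X))

/-- `(eₙ)` is a subsymmetric basic sequence. -/
def IsSubsymmetric {X : Type*} [NormedAddCommGroup X] [Module ℝ X] (e : ℕ → X) : Prop :=
  IsBasicSequence e ∧ ∃ C : ℝ, 1 ≤ C ∧ ∀ n : ℕ → ℕ, StrictMono n →
    ∀ s : Finset ℕ, ∀ a : ℕ → ℝ,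
      C⁻¹ * ‖∑ k ∈ s, a k • e k‖ ≤ ‖∑ k ∈ s, a k • e (n k)‖ ∧
      ‖∑ k ∈ s, a k • e (n k)‖ ≤ C * ‖∑ k ∈ s, a k • e k‖

/-! ### Schreier families -/

/-- `n ≤ A`: either `A = ∅` or `n ≤ min A`. -/
def natLE (n : ℕ) (A : Finset ℕ) : Prop := ∀ a ∈ A, n ≤ a

/-- `A < B`: either one is empty or `max A < min B`. -/
def finLT (A B : Finset ℕ) : Prop := ∀ a ∈ A, ∀ b ∈ B, a < b

/-- The Schreier families `S_α`, relative to a fixed assignment `lseq` of fundamental sequences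
to (countable) limit ordinals; here `lseq l n` denotes `λ_{n+1}` in 1-based notation. -/
def Schreier (lseq : Ordinal → ℕ → Ordinal) (α : Ordinal) : Set (Finset ℕ) :=
  Ordinal.limitRecOn α
    ({A | ∃ n : ℕ, 1 ≤ n ∧ A = {n}} ∪ {∅})
    (fun _ S => {A | ∃ n : ℕ, 1 ≤ n ∧ ∃ f : ℕ → Finset ℕ,
      (∀ i < n, f i ∈ S) ∧ natLE n (f 0) ∧
      (∀ i j : ℕ, i < j → j < n → finLT (f i) (f j)) ∧
      A = (Finset.range n).biUnion f})
    (fun o _ ih => {A | ∃ n : ℕ, natLE (n + 1) A ∧ ∃ h : lseq o n < o, A ∈ ih (lseq o n) h})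

/-- `lseq` is a legitimate assignment of fundamental sequences: to every countable limit
ordinal `l` it assigns a strictly increasing sequence of smaller ordinals with supremum `l`. -/
def IsFundSeq (lseq : Ordinal → ℕ → Ordinal) : Prop :=
  ∀ l : Ordinal, Order.IsSuccLimit l → l < (Cardinal.aleph 1).ord →
    StrictMono (lseq l) ∧ (∀ n, lseq l n < l) ∧ (⨆ n, lseq l n) = l

/-! ### The space `c₀` and `Z[S_α]_{c₀}` -/

/-- The Banach space `c₀` of real sequences vanishing at infinity, with the sup norm. -/
abbrev c0 : Type := ZeroAtInftyContinuousMap ℕ ℝ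

/-- The standard unit vector basis of `c₀`. -/
def stdBasis (n : ℕ) : c0 :=
  { toFun := fun m => if m = n then (1 : ℝ) else 0
    continuous_toFun := continuous_of_discreteTopology
    zero_at_infty' := by
      refine Filter.Tendsto.mono_left ?_ Filter.cocompact_le_cofinite
      refine tendsto_nhds_of_eventually_eq ?_
      refine Filter.eventually_cofinite.mpr (Set.Finite.subset (Set.finite_singleton n) ?_)
      intro m hm
      by_contra h
      exact hm (if_neg h) }

/-- The metric space `Z[S_α]_{c₀}` (as a subset of `c₀`). -/
def ZSchreierSet (lseq : Ordinal → ℕ → Ordinal) (α : Ordinal) : Set c0 :=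
  {x | ∃ A ∈ Schreier lseq α, ∃ t : ℕ → ℤ, x = ∑ i ∈ A, (t i : ℝ) • stdBasis i}

/-! ### Eventual domination -/

/-- The family `F ⊆ ℕ^ℕ` is bounded with respect to eventual domination. -/
def EvDomBounded (F : Set (ℕ → ℕ)) : Prop :=
  ∃ g : ℕ → ℕ, ∀ f ∈ F, ∀ᶠ m in Filter.atTop, f m < g m

end


noncomputable section
namespace Stmt7A

universe u v
variable {X : Type u} {E : Type v} [MetricSpace X] [MetricSpace E]

abbrev Om (E : Type v) : Type v := (ℕ → ℝ) × (ℕ → ℝ) × (ℕ → ℕ) × (ℕ → E)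

/-- Constraint set at level `k`. -/
def Con (x : ℕ → X) (k : ℕ) : Set (Om E) :=
  {w | Monotone w.1 ∧ Monotone w.2.1 ∧ (∀ n, 0 ≤ w.1 n) ∧ (∀ n, 0 ≤ w.2.1 n) ∧
    (∀ m : ℕ, (m : ℝ) ≤ w.1 (w.2.2.1 m)) ∧
    (∀ i j : ℕ, i < k → j < k →
      w.1 ⌊dist (x i) (x j)⌋₊ ≤ dist (w.2.2.2 i) (w.2.2.2 j) ∧
      dist (w.2.2.2 i) (w.2.2.2 j) ≤ w.2.1 ⌈dist (x i) (x j)⌉₊)}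

lemma con_antitone (x : ℕ → X) {k l : ℕ} (h : k ≤ l) : Con (E := E) x l ⊆ Con x k := by
  rintro w ⟨h1, h2, h3, h4, h5, h6⟩
  exact ⟨h1, h2, h3, h4, h5, fun i j hi hj => h6 i j (hi.trans_le h) (hj.trans_le h)⟩

lemma con_det (x : ℕ → X) {k : ℕ} {w : Om E} (hw : w ∈ Con x k) (φ : ℕ → E)
    (hφ : ∀ i, i < k → φ i = w.2.2.2 i) : (w.1, w.2.1, w.2.2.1, φ) ∈ Con x k := by
  obtain ⟨h1, h2, h3, h4, h5, h6⟩ := hw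
  refine ⟨h1, h2, h3, h4, h5, fun i j hi hj => ?_⟩
  simpa only [hφ i hi, hφ j hj] using h6 i j hi hj

lemma cont_u (n : ℕ) : Continuous fun w : Om E => w.1 n :=
  (continuous_apply n).comp continuous_fst

lemma cont_v (n : ℕ) : Continuous fun w : Om E => w.2.1 n :=
  (continuous_apply n).comp (continuous_fst.comp continuous_snd)

lemma cont_s (n : ℕ) : Continuous fun w : Om E => w.2.2.1 n :=
  (continuous_apply n).comp (continuous_fst.comp (continuous_snd.comp continuous_snd))

lemma cont_f (n : ℕ) : Continuous fun w : Om E => w.2.2.2 n :=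
  (continuous_apply n).comp (continuous_snd.comp (continuous_snd.comp continuous_snd))

lemma isClosed_con (x : ℕ → X) (k : ℕ) : IsClosed (Con (E := E) x k) := by
  have cu : ∀ n : ℕ, Continuous fun w : Om E => w.1 n := cont_u
  have cv : ∀ n : ℕ, Continuous fun w : Om E => w.2.1 n := cont_v
  have cs : ∀ n : ℕ, Continuous fun w : Om E => w.2.2.1 n := cont_s
  have cf : ∀ n : ℕ, Continuous fun w : Om E => w.2.2.2 n := cont_f
  have e : Con (E := E) x k =
      (⋂ (a : ℕ) (b : ℕ) (_ : a ≤ b), {w : Om E | w.1 a ≤ w.1 b}) ∩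
      (⋂ (a : ℕ) (b : ℕ) (_ : a ≤ b), {w : Om E | w.2.1 a ≤ w.2.1 b}) ∩
      (⋂ n : ℕ, {w : Om E | 0 ≤ w.1 n}) ∩
      (⋂ n : ℕ, {w : Om E | 0 ≤ w.2.1 n}) ∩
      (⋂ m : ℕ, {w : Om E | (m : ℝ) ≤ w.1 (w.2.2.1 m)}) ∩
      (⋂ (i : ℕ) (j : ℕ) (_ : i < k) (_ : j < k),
        ({w : Om E | w.1 ⌊dist (x i) (x j)⌋₊ ≤ dist (w.2.2.2 i) (w.2.2.2 j)} ∩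
         {w : Om E | dist (w.2.2.2 i) (w.2.2.2 j) ≤ w.2.1 ⌈dist (x i) (x j)⌉₊})) := by
    ext w
    simp only [Con, mem_setOf_eq, mem_inter_iff, mem_iInter, Monotone, mem_setOf_eq]
    constructor
    · rintro ⟨h1, h2, h3, h4, h5, h6⟩
      exact ⟨⟨⟨⟨⟨fun a b hab => h1 hab, fun a b hab => h2 hab⟩, h3⟩, h4⟩, h5⟩,
        fun i j hi hj => ⟨(h6 i j hi hj).1, (h6 i j hi hj).2⟩⟩
    · rintro ⟨⟨⟨⟨⟨h1, h2⟩, h3⟩, h4⟩, h5⟩, h6⟩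
      exact ⟨fun a b hab => h1 a b hab, fun a b hab => h2 a b hab, h3, h4, h5,
        fun i j hi hj => h6 i j hi hj⟩
  rw [e]
  refine IsClosed.inter (IsClosed.inter (IsClosed.inter (IsClosed.inter (IsClosed.inter
    ?_ ?_) ?_) ?_) ?_) ?_
  · exact isClosed_iInter fun a => isClosed_iInter fun b => isClosed_iInter fun _ =>
      isClosed_le (cu a) (cu b)
  · exact isClosed_iInter fun a => isClosed_iInter fun b => isClosed_iInter fun _ =>
      isClosed_le (cv a) (cv b)
  · exact isClosed_iInter fun n => isClosed_le continuous_const (cu n)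
  · exact isClosed_iInter fun n => isClosed_le continuous_const (cv n)
  · refine isClosed_iInter fun m => ?_
    rw [← isOpen_compl_iff]
    have e2 : {w : Om E | (m : ℝ) ≤ w.1 (w.2.2.1 m)}ᶜ =
        ⋃ c : ℕ, ({w : Om E | w.2.2.1 m = c} ∩ {w : Om E | w.1 c < (m : ℝ)}) := by
      ext w
      simp only [mem_compl_iff, mem_setOf_eq, not_le, mem_iUnion, mem_inter_iff]
      constructor
      · intro h; exact ⟨w.2.2.1 m, rfl, h⟩
      · rintro ⟨c, hc, hlt⟩; rwa [hc]
    rw [e2]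
    refine isOpen_iUnion fun c => IsOpen.inter ?_ (isOpen_lt (cu c) continuous_const)
    exact (isOpen_discrete {c}).preimage (cs m)
  · exact isClosed_iInter fun i => isClosed_iInter fun j => isClosed_iInter fun _ =>
      isClosed_iInter fun _ => IsClosed.inter
        (isClosed_le (cu _) ((cf i).dist (cf j)))
        (isClosed_le ((cf i).dist (cf j)) (cv _))

/-- One-step extension set. -/
def Ext (D : ℕ → Set (Om E)) (k : ℕ) : Set (Om E) :=
  {w | w ∈ D k ∧ ∃ w' ∈ D (k + 1), w'.1 = w.1 ∧ w'.2.1 = w.2.1 ∧ w'.2.2.1 = w.2.2.1 ∧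
    ∀ i, i < k → w'.2.2.2 i = w.2.2.2 i}

/-- The node relation. -/
def Rel (x : ℕ → X) (a b : ℕ × Om E) : Prop :=
  a.1 = b.1 + 1 ∧ a.2 ∈ Con x a.1 ∧ b.2 ∈ Con x b.1 ∧
    a.2.1 = b.2.1 ∧ a.2.2.1 = b.2.2.1 ∧ a.2.2.2.1 = b.2.2.2.1 ∧
    ∀ i, i < b.1 → a.2.2.2.2 i = b.2.2.2.2 i

/-- The transfinite derivative. -/
def Der (x : ℕ → X) (α : Ordinal.{v}) (k : ℕ) : Set (Om E) :=
  Con x k ∩ ⋂ β : (Set.Iio α), closure (Ext (fun k' => Der x β.1 k') k)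
termination_by α
decreasing_by exact β.2

lemma der_def (x : ℕ → X) (α : Ordinal.{v}) (k : ℕ) :
    Der (E := E) x α k = Con x k ∩ ⋂ β : (Set.Iio α), closure (Ext (fun k' => Der x β.1 k') k) := by
  rw [Der]

lemma der_subset_con (x : ℕ → X) (α : Ordinal.{v}) (k : ℕ) :
    Der (E := E) x α k ⊆ Con x k := by
  rw [der_def]; exact inter_subset_left

lemma der_anti (x : ℕ → X) {β α : Ordinal.{v}} (h : β ≤ α) (k : ℕ) :
    Der (E := E) x α k ⊆ Der x β k := by
  rw [der_def, der_def]
  refine inter_subset_inter le_rfl ?_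
  intro w hw
  rw [mem_iInter] at hw ⊢
  exact fun γ => hw ⟨γ.1, lt_of_lt_of_le γ.2 h⟩

lemma isClosed_der (x : ℕ → X) (α : Ordinal.{v}) (k : ℕ) :
    IsClosed (Der (E := E) x α k) := by
  rw [der_def]
  exact (isClosed_con x k).inter (isClosed_iInter fun β => isClosed_closure)

lemma der_succ (x : ℕ → X) (α : Ordinal.{v}) (k : ℕ) :
    Der (E := E) x (Order.succ α) k ⊆ closure (Ext (fun k' => Der x α k') k) := by
  rw [der_def]
  intro w hw
  exact (mem_iInter.1 hw.2) ⟨α, Order.lt_succ α⟩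


lemma acc_of_notMem_der (x : ℕ → X) :
    ∀ α : Ordinal.{v}, ∀ k : ℕ, ∀ w : Om E, w ∈ Con x k → w ∉ Der x α k →
      ∃ h : Acc (Rel x) (k, w), h.rank < α := by
  intro α
  induction α using Ordinal.induction with
  | h α IH =>
  intro k w hw hnd
  have hex : ∃ β : Set.Iio α, w ∉ closure (Ext (fun k' => Der x β.1 k') k) := by
    by_contra hcon
    push_neg at hcon
    refine hnd ?_
    rw [der_def]
    exact ⟨hw, mem_iInter.2 hcon⟩
  obtain ⟨⟨β, hβ⟩, hβw⟩ := hex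
  by_cases hwd : w ∈ Der x β k
  · -- every predecessor is outside `Der x β (k+1)`
    have hacc : ∀ a, Rel x a (k, w) → ∃ h : Acc (Rel x) a, h.rank < β := by
      rintro ⟨k', w'⟩ ⟨hk1, hmem, -, hu, hv, hs, hφ⟩
      simp only at hk1 hu hv hs hφ
      subst hk1
      have hnd' : w' ∉ Der x β (k + 1) := by
        intro hmem'
        refine hβw (subset_closure ?_)
        exact ⟨hwd, w', hmem', hu, hv, hs, hφ⟩
      exact IH β hβ (k + 1) w' hmem hnd'
    refine ⟨Acc.intro _ (fun a ha => (hacc a ha).choose), ?_⟩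
    rw [Acc.rank_eq]
    refine lt_of_le_of_lt (Ordinal.iSup_le ?_) hβ
    rintro ⟨a, ha⟩
    rw [Order.succ_le_iff]
    obtain ⟨h', hlt⟩ := hacc a ha
    exact lt_of_eq_of_lt (congrArg Acc.rank (Subsingleton.elim _ h')) hlt
  · obtain ⟨h, hr⟩ := IH β hβ k w hw hwd
    exact ⟨h, hr.trans hβ⟩

lemma rank_le_of_hom {A : Type v} {B : Type v} {rA : A → A → Prop} {rB : B → B → Prop}
    (g : A → B) (hg : ∀ a a', rA a' a → rB (g a') (g a)) :
    ∀ {b : B} (hb : Acc rB b) {a : A}, g a = b → ∃ ha : Acc rA a, ha.rank ≤ hb.rank := by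
  intro b hb
  induction hb with
  | intro b hpred IH =>
    intro a hab
    subst hab
    refine ⟨Acc.intro a (fun a' ha' => (IH _ (hg a a' ha') rfl).choose), ?_⟩
    rw [Acc.rank_eq]
    apply Ordinal.iSup_le
    rintro ⟨a', ha'⟩
    rw [Order.succ_le_iff]
    obtain ⟨h', hle⟩ := IH _ (hg a a' ha') rfl
    have h2 := Acc.rank_lt_of_rel (Acc.intro (g a) hpred) (hg a a' ha')
    refine lt_of_eq_of_lt (congrArg Acc.rank (Subsingleton.elim _ h')) ?_
    refine lt_of_le_of_lt hle ?_
    exact lt_of_eq_of_lt (congrArg Acc.rank (Subsingleton.elim _ _)) h2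

lemma exists_stab [TopologicalSpace.SeparableSpace E] (x : ℕ → X) :
    ∃ α : Ordinal.{v}, α < (Cardinal.aleph 1).ord ∧
      ∀ k, Der (E := E) x (Order.succ α) k = Der x α k := by
  haveI : SecondCountableTopology E := UniformSpace.secondCountable_of_separable E
  by_contra hcon
  push_neg at hcon
  obtain ⟨B, hBc, -, hB⟩ := TopologicalSpace.exists_countable_basis (Om E)
  have key : ∀ α : (Set.Iio (Cardinal.aleph 1).ord), ∃ (k : ℕ) (b : B) (wit : Om E),
      wit ∈ Der x α.1 k ∧ wit ∈ b.1 ∧ ∀ w ∈ b.1, w ∉ Der x (Order.succ α.1) k := by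
    rintro ⟨α, hα⟩
    obtain ⟨k, hk⟩ := hcon α hα
    have hsub : Der (E := E) x (Order.succ α) k ⊆ Der x α k :=
      der_anti x (Order.le_succ α) k
    have hex : ∃ w, w ∈ Der (E := E) x α k ∧ w ∉ Der x (Order.succ α) k := by
      by_contra h
      push_neg at h
      exact hk (Subset.antisymm hsub h)
    obtain ⟨w, hw1, hw2⟩ := hex
    obtain ⟨b, hbB, hwb, hbsub⟩ := hB.exists_subset_of_mem_open
      (show w ∈ (Der x (Order.succ α) k)ᶜ from hw2) (isClosed_der x _ k).isOpen_compl
    exact ⟨k, ⟨b, hbB⟩, w, hw1, hwb, fun w' hw' hmem => hbsub hw' hmem⟩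
  choose K Bf W hW1 hW2 hW3 using key
  have hinjlt : ∀ γ δ : (Set.Iio (Cardinal.aleph 1).ord), γ.1 < δ.1 →
      (K γ, Bf γ) ≠ (K δ, Bf δ) := by
    intro γ δ hlt hEq
    have hK : K γ = K δ := congrArg Prod.fst hEq
    have hBf : Bf γ = Bf δ := congrArg Prod.snd hEq
    have h1 : W δ ∈ Der x (Order.succ γ.1) (K γ) := by
      rw [hK]
      exact der_anti x (Order.succ_le_of_lt hlt) (K δ) (hW1 δ)
    exact hW3 γ (W δ) (by rw [hBf]; exact hW2 δ) h1
  have hinj : Function.Injective (fun α : (Set.Iio (Cardinal.aleph 1).ord) => (K α, Bf α)) := by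
    intro γ δ h
    rcases lt_trichotomy γ.1 δ.1 with hlt | heq | hlt
    · exact absurd h (hinjlt γ δ hlt)
    · exact Subtype.ext heq
    · exact absurd h.symm (hinjlt δ γ hlt)
  haveI : Countable B := hBc.to_subtype
  haveI hcnt : Countable (Set.Iio (Cardinal.aleph 1).ord) := hinj.countable
  have h1 := Cardinal.mk_le_aleph0 (α := (Set.Iio (Cardinal.aleph 1).ord))
  rw [Ordinal.mk_Iio_ordinal, Cardinal.card_ord, ← Cardinal.lift_aleph0.{v+1, v}] at h1
  exact absurd (Cardinal.lift_le.1 h1) (not_le.2 Cardinal.aleph0_lt_aleph_one)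


lemma step_lemma (x : ℕ → X) {α : Ordinal.{v}}
    (hstab : ∀ k, Der (E := E) x (Order.succ α) k = Der x α k)
    (k : ℕ) (w : Om E) (hw : w ∈ Der x α k) {ε : ℝ} (hε : 0 < ε) (n : ℕ) :
    ∃ w' : Om E, w' ∈ Der x α (k + 1) ∧ ∀ i, i ≤ n →
      dist (w'.1 i) (w.1 i) < ε ∧ dist (w'.2.1 i) (w.2.1 i) < ε ∧
      w'.2.2.1 i = w.2.2.1 i ∧ (i < k → dist (w'.2.2.2 i) (w.2.2.2 i) < ε) := by
  have hw' : w ∈ closure (Ext (fun k' => Der x α k') k) :=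
    der_succ x α k ((hstab k).symm ▸ hw)
  set U : Set (Om E) := ⋂ i : Fin (n + 1),
    ({z : Om E | dist (z.1 i.1) (w.1 i.1) < ε} ∩ {z : Om E | dist (z.2.1 i.1) (w.2.1 i.1) < ε} ∩
     {z : Om E | z.2.2.1 i.1 = w.2.2.1 i.1} ∩
     {z : Om E | dist (z.2.2.2 i.1) (w.2.2.2 i.1) < ε}) with hUdef
  have hUopen : IsOpen U := by
    refine isOpen_iInter_of_finite fun i => ?_
    refine IsOpen.inter (IsOpen.inter (IsOpen.inter ?_ ?_) ?_) ?_
    · exact isOpen_lt ((cont_u i.1).dist continuous_const) continuous_const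
    · exact isOpen_lt ((cont_v i.1).dist continuous_const) continuous_const
    · exact (isOpen_discrete {w.2.2.1 i.1}).preimage (cont_s i.1)
    · exact isOpen_lt ((cont_f i.1).dist continuous_const) continuous_const
  have hwU : w ∈ U :=
    mem_iInter.2 fun i =>
      ⟨⟨⟨by simpa using hε, by simpa using hε⟩, rfl⟩, by simpa using hε⟩
  obtain ⟨z, hzU, hzE⟩ := mem_closure_iff.1 hw' U hUopen hwU
  obtain ⟨hzD, w', hw'D, hu, hv, hs, hφ⟩ := hzE
  refine ⟨w', hw'D, fun i hi => ?_⟩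
  have hiU := mem_iInter.1 hzU ⟨i, Nat.lt_succ_of_le hi⟩
  obtain ⟨⟨⟨hz1, hz2⟩, hz3⟩, hz4⟩ := hiU
  refine ⟨by rw [hu]; exact hz1, by rw [hv]; exact hz2, by rw [hs]; exact hz3,
    fun hik => by rw [hφ i hik]; exact hz4⟩

lemma exists_lim {M : Type*} [MetricSpace M] [CompleteSpace M] (g : ℕ → M) (N : ℕ)
    (h : ∀ m, N ≤ m → dist (g m) (g (m + 1)) ≤ (1/2 : ℝ) ^ m) :
    ∃ L, Tendsto g atTop (nhds L) := by
  have hc : CauchySeq (fun m => g (m + N)) := by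
    apply cauchySeq_of_le_geometric (1/2) ((1/2) ^ N) (by norm_num)
    intro m
    have h1 := h (m + N) (by omega)
    rw [show m + 1 + N = m + N + 1 from by omega]
    calc dist (g (m + N)) (g (m + N + 1)) ≤ (1/2 : ℝ) ^ (m + N) := h1
      _ = (1/2) ^ N * (1/2) ^ m := by rw [pow_add]; ring
  obtain ⟨L, hL⟩ := cauchySeq_tendsto_of_complete hc
  exact ⟨L, (tendsto_add_atTop_iff_nat N).1 hL⟩

lemma exists_branch [CompleteSpace E] (x : ℕ → X) {α : Ordinal.{v}}
    (hstab : ∀ k, Der (E := E) x (Order.succ α) k = Der x α k)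
    (k₀ : ℕ) (w₀ : Om E) (hw₀ : w₀ ∈ Der x α k₀) :
    ∃ w : Om E, ∀ k, w ∈ Con x k := by
  classical
  have hstep : ∀ m : ℕ, ∀ w ∈ Der x α (k₀ + m), ∃ w' : Om E,
      w' ∈ Der x α (k₀ + m + 1) ∧ ∀ i, i ≤ m →
      dist (w'.1 i) (w.1 i) < (1/2 : ℝ) ^ m ∧ dist (w'.2.1 i) (w.2.1 i) < (1/2 : ℝ) ^ m ∧
      w'.2.2.1 i = w.2.2.1 i ∧ (i < k₀ + m → dist (w'.2.2.2 i) (w.2.2.2 i) < (1/2 : ℝ) ^ m) :=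
    fun m w hw => step_lemma x hstab (k₀ + m) w hw (pow_pos (by norm_num) m) m
  let g : (m : ℕ) → {w : Om E // w ∈ Der x α (k₀ + m)} := fun m =>
    Nat.rec (motive := fun m => {w : Om E // w ∈ Der x α (k₀ + m)}) ⟨w₀, hw₀⟩
      (fun m p => ⟨(hstep m p.1 p.2).choose, (hstep m p.1 p.2).choose_spec.1⟩) m
  have hgs : ∀ m, ∀ i, i ≤ m →
      dist ((g (m+1)).1.1 i) ((g m).1.1 i) < (1/2 : ℝ) ^ m ∧
      dist ((g (m+1)).1.2.1 i) ((g m).1.2.1 i) < (1/2 : ℝ) ^ m ∧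
      (g (m+1)).1.2.2.1 i = (g m).1.2.2.1 i ∧
      (i < k₀ + m → dist ((g (m+1)).1.2.2.2 i) ((g m).1.2.2.2 i) < (1/2 : ℝ) ^ m) :=
    fun m => (hstep m (g m).1 (g m).2).choose_spec.2
  have hU : ∀ i, ∃ L, Tendsto (fun m => (g m).1.1 i) atTop (nhds L) := fun i =>
    exists_lim _ i (fun m hm => by
      have h1 := (hgs m i hm).1
      rw [dist_comm] at h1
      exact h1.le)
  choose uL huL using hU
  have hV : ∀ i, ∃ L, Tendsto (fun m => (g m).1.2.1 i) atTop (nhds L) := fun i =>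
    exists_lim _ i (fun m hm => by
      have h1 := (hgs m i hm).2.1
      rw [dist_comm] at h1
      exact h1.le)
  choose vL hvL using hV
  have hsconst : ∀ i m, i ≤ m → (g m).1.2.2.1 i = (g i).1.2.2.1 i := by
    intro i m him
    induction m, him using Nat.le_induction with
    | base => rfl
    | succ m hm ih => rw [(hgs m i hm).2.2.1]; exact ih
  have hF : ∀ i, ∃ L, Tendsto (fun m => (g m).1.2.2.2 i) atTop (nhds L) := fun i =>
    exists_lim _ (i + 1) (fun m hm => by
      have h1 := (hgs m i (by omega)).2.2.2 (by omega)
      rw [dist_comm] at h1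
      exact h1.le)
  choose fL hfL using hF
  refine ⟨(uL, vL, fun i => (g i).1.2.2.1 i, fL), fun k => ?_⟩
  set z : ℕ → Om E := fun m =>
    ((g m).1.1, (g m).1.2.1, (g m).1.2.2.1,
      fun i => if i < k₀ + m then (g m).1.2.2.2 i else fL i) with hzdef
  have hzmem : ∀ m, k ≤ k₀ + m → z m ∈ Con x k := by
    intro m hkm
    refine con_antitone x hkm ?_
    exact con_det x (der_subset_con x α (k₀ + m) (g m).2) _ (fun i hi => if_pos hi)
  have hzt : Tendsto z atTop (nhds (uL, vL, fun i => (g i).1.2.2.1 i, fL)) := by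
    refine Tendsto.prodMk_nhds ?_ (Tendsto.prodMk_nhds ?_ (Tendsto.prodMk_nhds ?_ ?_))
    · rw [tendsto_pi_nhds]; exact fun i => huL i
    · rw [tendsto_pi_nhds]; exact fun i => hvL i
    · rw [tendsto_pi_nhds]
      intro i
      refine tendsto_nhds_of_eventually_eq ?_
      filter_upwards [eventually_ge_atTop i] with m hm
      exact hsconst i m hm
    · rw [tendsto_pi_nhds]
      intro i
      refine Tendsto.congr' ?_ (hfL i)
      filter_upwards [eventually_ge_atTop (i + 1)] with m hm
      exact (if_pos (by omega)).symm
  refine (isClosed_con x k).mem_of_tendsto hzt ?_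
  filter_upwards [eventually_ge_atTop k] with m hm
  exact hzmem m (by omega)


/-- From a full branch, a coarse embedding. -/
lemma embed_of_branch (x : ℕ → X) (hx : DenseRange x) (w : Om E) (hw : ∀ k, w ∈ Con x k) :
    ∃ f : X → E, CoarseEmbeddingMap f := by
  classical
  obtain ⟨hu, hv, hu0, hv0, hs, -⟩ := hw 0
  have hpair : ∀ i j : ℕ, w.1 ⌊dist (x i) (x j)⌋₊ ≤ dist (w.2.2.2 i) (w.2.2.2 j) ∧
      dist (w.2.2.2 i) (w.2.2.2 j) ≤ w.2.1 ⌈dist (x i) (x j)⌉₊ := by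
    intro i j
    exact (hw (max i j + 1)).2.2.2.2.2 i j (by omega) (by omega)
  have hnear : ∀ a : X, ∃ i, dist a (x i) < 1 := fun a => hx.exists_dist_lt a one_pos
  choose I hI using hnear
  refine ⟨fun a => w.2.2.2 (I a),
    fun t => w.1 ⌊t - 2⌋₊, fun t => w.2.1 ⌈t + 2⌉₊, ?_, ?_, ?_, ?_, ?_⟩
  · exact fun a _ b _ hab => hu (Nat.floor_mono (by linarith))
  · exact fun a _ b _ hab => hv (Nat.ceil_mono (by linarith))
  · exact fun t _ => ⟨hu0 _, hv0 _⟩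
  · rw [tendsto_atTop]
    intro b
    filter_upwards [eventually_ge_atTop ((w.2.2.1 ⌈b⌉₊ : ℝ) + 3)] with t ht
    have h1 : (w.2.2.1 ⌈b⌉₊ : ℕ) ≤ ⌊t - 2⌋₊ := Nat.le_floor (by linarith)
    calc b ≤ (⌈b⌉₊ : ℝ) := Nat.le_ceil b
      _ ≤ w.1 (w.2.2.1 ⌈b⌉₊) := hs _
      _ ≤ w.1 ⌊t - 2⌋₊ := hu h1
  · intro a b
    have h1 : dist (x (I a)) (x (I b)) ≤ dist a b + 2 := by
      have h2 := dist_triangle4 (x (I a)) a b (x (I b))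
      have h3 : dist (x (I a)) a < 1 := by rw [dist_comm]; exact hI a
      have h4 : dist b (x (I b)) < 1 := hI b
      linarith
    have h5 : dist a b - 2 ≤ dist (x (I a)) (x (I b)) := by
      have h2 := dist_triangle4 a (x (I a)) (x (I b)) b
      have h3 := hI a
      have h4 : dist (x (I b)) b < 1 := by rw [dist_comm]; exact hI b
      linarith
    constructor
    · calc w.1 ⌊dist a b - 2⌋₊ ≤ w.1 ⌊dist (x (I a)) (x (I b))⌋₊ := hu (Nat.floor_mono h5)
        _ ≤ dist (w.2.2.2 (I a)) (w.2.2.2 (I b)) := (hpair (I a) (I b)).1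
    · calc dist (w.2.2.2 (I a)) (w.2.2.2 (I b)) ≤
          w.2.1 ⌈dist (x (I a)) (x (I b))⌉₊ := (hpair (I a) (I b)).2
        _ ≤ w.2.1 ⌈dist a b + 2⌉₊ := hv (Nat.ceil_mono h1)

/-! ### The homomorphism from `CoaSet` into the node relation -/

def uFun (κ : ℝ → ℝ≥0∞) (n : ℕ) : ℝ :=
  if n = 0 then 0 else (min (κ (n : ℝ)) (ENNReal.ofReal (n : ℝ))).toReal

def vFun (ω : ℝ → ℝ≥0∞) (n : ℕ) : ℝ :=
  if n = 0 then 0 else (ω (n : ℝ)).toReal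

open scoped Classical in
def sFun (κ : ℝ → ℝ≥0∞) (m : ℕ) : ℕ :=
  if h : ∃ N : ℕ, m ≤ N ∧ ENNReal.ofReal (m : ℝ) < κ (N : ℝ) then h.choose else 0

def gMap (q : Quad E) : ℕ × Om E :=
  (q.k, (uFun q.kappa, vFun q.omega, sFun q.kappa, q.phi))

lemma nat_mem_zset {n : ℕ} (h : 1 ≤ n) : (n : ℝ) ∈ Zset := ⟨n, h, Or.inl rfl⟩

lemma tplus_mem_zset_le {d : ℝ} (hd : 0 < d) :
    tplus d ∈ Zset ∧ tplus d ≤ (⌈d⌉₊ : ℝ) ∧ 1 ≤ ⌈d⌉₊ := by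
  have hc : 1 ≤ ⌈d⌉₊ := Nat.ceil_pos.2 hd
  by_cases h1 : 1 ≤ d
  · have he : tplus d = (⌈d⌉₊ : ℝ) := by
      rw [tplus, if_pos h1, ← natCast_ceil_eq_intCast_ceil (by linarith)]
    constructor
    · rw [he]; exact nat_mem_zset hc
    · exact ⟨le_of_eq he, hc⟩
  · have h1' : d ≤ 1 := le_of_not_ge h1
    have hinv : (1 : ℝ) ≤ 1 / d := by
      rw [le_div_iff₀ hd]; linarith
    have hfl : (1 : ℤ) ≤ ⌊1 / d⌋ := by
      exact_mod_cast Int.le_floor.2 (by exact_mod_cast hinv)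
    have hflR : (1 : ℝ) ≤ (⌊1 / d⌋ : ℝ) := by exact_mod_cast hfl
    have he : tplus d = 1 / ((⌊1 / d⌋ : ℤ) : ℝ) := by
      rw [tplus, if_neg h1]
    constructor
    · refine ⟨(⌊1 / d⌋).toNat, by omega, Or.inr ?_⟩
      have hcast : ((⌊1 / d⌋.toNat : ℕ) : ℝ) = ((⌊1 / d⌋ : ℤ) : ℝ) := by
        norm_cast
        omega
      rw [he, hcast]
    · constructor
      · rw [he]
        have : 1 / ((⌊1 / d⌋ : ℤ) : ℝ) ≤ 1 := by
          rw [div_le_one (by linarith)]; exact hflR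
        calc 1 / ((⌊1 / d⌋ : ℤ) : ℝ) ≤ 1 := this
          _ ≤ (⌈d⌉₊ : ℝ) := by exact_mod_cast hc
      · exact hc

lemma tminus_eq {d : ℝ} (h : 1 ≤ d) : tminus d = (⌊d⌋₊ : ℝ) := by
  rw [tminus, if_pos h, ← natCast_floor_eq_intCast_floor (by linarith)]

lemma mem_con_of_coa (x : ℕ → X) {q : Quad E} (hq : q ∈ CoaSet x) :
    (gMap q).2 ∈ Con x q.k := by
  obtain ⟨⟨hκ, hω, hphi, hpairs⟩, hfin, htop⟩ := hq
  have hsfun : ∀ m : ℕ, (m : ℕ) ≤ sFun q.kappa m ∧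
      ENNReal.ofReal (m : ℝ) < q.kappa ((sFun q.kappa m : ℕ) : ℝ) := by
    intro m
    have hex : ∃ N : ℕ, m ≤ N ∧ ENNReal.ofReal (m : ℝ) < q.kappa (N : ℝ) := by
      have hmem : Set.Ioi (ENNReal.ofReal (m : ℝ)) ∈ nhds (⊤ : ℝ≥0∞) :=
        isOpen_Ioi.mem_nhds ENNReal.ofReal_lt_top
      have hev : ∀ᶠ n : ℕ in atTop, q.kappa (n : ℝ) ∈ Set.Ioi (ENNReal.ofReal (m : ℝ)) :=
        htop.eventually_mem hmem
      obtain ⟨N, hN⟩ := eventually_atTop.1 hev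
      exact ⟨max m N, le_max_left _ _, hN _ (le_max_right _ _)⟩
    rw [sFun, dif_pos hex]
    exact ⟨hex.choose_spec.1, hex.choose_spec.2⟩
  have hune : ∀ n : ℕ, min (q.kappa (n : ℝ)) (ENNReal.ofReal (n : ℝ)) ≠ ⊤ := fun n =>
    ne_top_of_le_ne_top ENNReal.ofReal_ne_top (min_le_right _ _)
  have humono : Monotone (uFun q.kappa) := by
    intro a b hab
    rcases Nat.eq_zero_or_pos a with ha | ha
    · subst ha
      rw [uFun, if_pos rfl]
      rcases Nat.eq_zero_or_pos b with hb | hb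
      · subst hb; rw [uFun, if_pos rfl]
      · rw [uFun, if_neg (by omega)]; exact ENNReal.toReal_nonneg
    · have hb : 0 < b := lt_of_lt_of_le ha hab
      rw [uFun, if_neg (by omega), uFun, if_neg (by omega)]
      refine ENNReal.toReal_mono (hune b) (min_le_min ?_ ?_)
      · exact hκ (nat_mem_zset ha) (nat_mem_zset hb) (by exact_mod_cast hab)
      · exact ENNReal.ofReal_le_ofReal (by exact_mod_cast hab)
  have hvmono : Monotone (vFun q.omega) := by
    intro a b hab
    rcases Nat.eq_zero_or_pos a with ha | ha
    · subst ha
      rw [vFun, if_pos rfl]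
      rcases Nat.eq_zero_or_pos b with hb | hb
      · subst hb; rw [vFun, if_pos rfl]
      · rw [vFun, if_neg (by omega)]; exact ENNReal.toReal_nonneg
    · have hb : 0 < b := lt_of_lt_of_le ha hab
      rw [vFun, if_neg (by omega), vFun, if_neg (by omega)]
      refine ENNReal.toReal_mono (hfin _ (nat_mem_zset hb)).ne ?_
      exact hω (nat_mem_zset ha) (nat_mem_zset hb) (by exact_mod_cast hab)
  have hu0 : ∀ n, 0 ≤ uFun q.kappa n := by
    intro n
    rw [uFun]
    split
    · exact le_refl 0
    · exact ENNReal.toReal_nonneg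
  have hv0 : ∀ n, 0 ≤ vFun q.omega n := by
    intro n
    rw [vFun]
    split
    · exact le_refl 0
    · exact ENNReal.toReal_nonneg
  refine ⟨humono, hvmono, hu0, hv0, ?_, ?_⟩
  · -- the witness inequality
    intro m
    rcases Nat.eq_zero_or_pos m with hm | hm
    · subst hm; exact (Nat.cast_zero (R := ℝ)).trans_le (hu0 _)
    · obtain ⟨hsm, hκm⟩ := hsfun m
      have hsm1 : 0 < sFun q.kappa m := lt_of_lt_of_le hm hsm
      show (m : ℝ) ≤ uFun q.kappa (sFun q.kappa m)
      rw [uFun, if_neg (by omega)]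
      have h1 : ENNReal.ofReal (m : ℝ) ≤
          min (q.kappa ((sFun q.kappa m : ℕ) : ℝ)) (ENNReal.ofReal ((sFun q.kappa m : ℕ) : ℝ)) :=
        le_min hκm.le (ENNReal.ofReal_le_ofReal (by exact_mod_cast hsm))
      calc (m : ℝ) = (ENNReal.ofReal (m : ℝ)).toReal := by
            rw [ENNReal.toReal_ofReal (Nat.cast_nonneg m)]
        _ ≤ _ := ENNReal.toReal_mono (hune _) h1
  · -- the pair constraints
    intro i j hik hjk
    by_cases hxy : x i = x j
    · have hphij : q.phi i = q.phi j := hphi i j hxy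
      constructor
      · have hd0 : dist (x i) (x j) = 0 := by rw [hxy, dist_self]
        rw [hd0]
        norm_num [uFun]
        exact dist_nonneg
      · show dist (q.phi i) (q.phi j) ≤ vFun q.omega _
        rw [hphij, dist_self]
        exact hv0 _
    · have hd : 0 < dist (x i) (x j) := dist_pos.2 hxy
      set d := dist (x i) (x j) with hddef
      have hed := hpairs i hik j hjk hxy
      constructor
      · -- lower bound
        by_cases hf0 : ⌊d⌋₊ = 0
        · rw [hf0]
          show uFun q.kappa 0 ≤ _
          rw [uFun, if_pos rfl]
          exact dist_nonneg
        · have h1d : 1 ≤ d := Nat.floor_pos.1 (by omega)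
          have htm : q.kappa ((⌊d⌋₊ : ℕ) : ℝ) ≤ edist (q.phi i) (q.phi j) := by
            have := hed.1
            rwa [tminus_eq h1d] at this
          show uFun q.kappa ⌊d⌋₊ ≤ dist (q.phi i) (q.phi j)
          rw [uFun, if_neg hf0, dist_edist]
          exact ENNReal.toReal_mono (edist_ne_top _ _) ((min_le_left _ _).trans htm)
      · -- upper bound
        obtain ⟨hZm, hle, hc1⟩ := tplus_mem_zset_le hd
        have h2 : q.omega (tplus d) ≤ q.omega ((⌈d⌉₊ : ℕ) : ℝ) :=
          hω hZm (nat_mem_zset hc1) hle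
        show dist (q.phi i) (q.phi j) ≤ vFun q.omega ⌈d⌉₊
        rw [vFun, if_neg (by omega), dist_edist]
        exact ENNReal.toReal_mono (hfin _ (nat_mem_zset hc1)).ne (hed.2.trans h2)

lemma gmap_rel (x : ℕ → X) {p q : Quad E} (hp : p ∈ CoaSet x) (hq : q ∈ CoaSet x)
    (hpq : QuadRel p q) : Rel x (gMap p) (gMap q) := by
  obtain ⟨hκ, hω, hk, hφ⟩ := hpq
  refine ⟨hk, mem_con_of_coa x hp, mem_con_of_coa x hq, ?_, ?_, ?_, ?_⟩
  · show uFun p.kappa = uFun q.kappa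
    rw [hκ]
  · show vFun p.omega = vFun q.omega
    rw [hω]
  · show sFun p.kappa = sFun q.kappa
    rw [hκ]
  · exact fun i hi => hφ i hi

end Stmt7A
end

theorem stmt7 {X E : Type*} [MetricSpace X] [MetricSpace E]
    [TopologicalSpace.SeparableSpace X] [CompleteSpace X]
    [TopologicalSpace.SeparableSpace E] [CompleteSpace E]
    (x : ℕ → X) (hx : DenseRange x) :
    (∃ f : X → E, CoarseEmbeddingMap f) ∨
      ∃ hwf : WellFounded fun p q : ↥(CoaSet (E := E) x) => QuadRel p.1 q.1,
        relRankOn QuadRel (CoaSet (E := E) x) hwf < (Cardinal.aleph 1).ord := by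
  classical
  obtain ⟨α, hα, hstab⟩ := Stmt7A.exists_stab (X := X) (E := E) x
  by_cases hbr : ∃ k₀, ∃ w₀ : Stmt7A.Om E, w₀ ∈ Stmt7A.Der x α k₀
  · obtain ⟨k₀, w₀, hw₀⟩ := hbr
    obtain ⟨w, hw⟩ := Stmt7A.exists_branch x hstab k₀ w₀ hw₀
    exact Or.inl (Stmt7A.embed_of_branch x hx w hw)
  · push_neg at hbr
    have hcon : ∀ (k : ℕ) (w : Stmt7A.Om E), w ∈ Stmt7A.Con x k →
        ∃ h : Acc (Stmt7A.Rel x) (k, w), h.rank < α :=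
      fun k w hw => Stmt7A.acc_of_notMem_der x α k w hw (hbr k w)
    have hg : ∀ p q : ↥(CoaSet (E := E) x), QuadRel p.1 q.1 →
        Stmt7A.Rel x (Stmt7A.gMap p.1) (Stmt7A.gMap q.1) :=
      fun p q h => Stmt7A.gmap_rel x p.2 q.2 h
    have hacc : ∀ a : ↥(CoaSet (E := E) x),
        Acc (fun p q : ↥(CoaSet (E := E) x) => QuadRel p.1 q.1) a := by
      intro a
      have hge : Acc (Stmt7A.Rel x) (Stmt7A.gMap a.1) :=
        (hcon a.1.k _ (Stmt7A.mem_con_of_coa x a.2)).choose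
      exact (Stmt7A.rank_le_of_hom (fun p : ↥(CoaSet (E := E) x) => Stmt7A.gMap p.1)
        (fun b b' h => hg b' b h) hge rfl).choose
    refine Or.inr ⟨⟨hacc⟩, ?_⟩
    have hbound : ∀ a : ↥(CoaSet (E := E) x),
        Order.succ (((WellFounded.intro hacc).apply a).rank) ≤ α := by
      intro a
      rw [Order.succ_le_iff]
      obtain ⟨hb, hblt⟩ := hcon a.1.k _ (Stmt7A.mem_con_of_coa x a.2)
      obtain ⟨ha, hle⟩ := Stmt7A.rank_le_of_hom
        (fun p : ↥(CoaSet (E := E) x) => Stmt7A.gMap p.1)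
        (fun b b' h => hg b' b h) hb (a := a) rfl
      refine lt_of_eq_of_lt (congrArg Acc.rank (Subsingleton.elim _ ha)) ?_
      exact lt_of_le_of_lt hle hblt
    exact lt_of_le_of_lt (Ordinal.iSup_le hbound) hα
end

section
/- Let X and E be separable complete metric spaces, with X non-empty, and let D = {x₁,x₂,…} be a fixed enumeration of a countable dense subset of X. Then either X bi-Lipschitz embeds into E, or the relation < is well-founded on Lip(D,E) and rk(Lip(D,E), <) is a countable ordinal. -/
open Filter Set Topology
open scoped ENNReal

/-! ### Auxiliary material for `stmt9` -/

section Stmt9Aux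

open Filter Set Topology
open scoped ENNReal

lemma Zset_pos {r : ℝ} (hr : r ∈ Zset) : 0 < r := by
  obtain ⟨n, hn, h | h⟩ := hr <;> subst h
  · exact_mod_cast Nat.lt_of_lt_of_le Nat.zero_lt_one hn
  · positivity

lemma tminus_spec {t : ℝ} (ht : 0 < t) :
    tminus t ∈ Zset ∧ t / 2 ≤ tminus t ∧ tminus t ≤ t := by
  unfold tminus
  by_cases h : 1 ≤ t
  · rw [if_pos h]
    have h0 : (1 : ℤ) ≤ ⌊t⌋ := by exact_mod_cast Int.le_floor.2 (by exact_mod_cast h)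
    have hfl : (⌊t⌋ : ℝ) ≤ t := Int.floor_le t
    have hgt : t - 1 < ⌊t⌋ := by have := Int.lt_floor_add_one t; linarith
    have h1 : (1:ℝ) ≤ (⌊t⌋ : ℝ) := by exact_mod_cast h0
    exact ⟨⟨⌊t⌋.toNat, by omega, Or.inl (by norm_cast; omega)⟩, by linarith, hfl⟩
  · rw [if_neg h]
    push_neg at h
    set s := 1 / t with hs
    have hsp : 0 < s := by positivity
    have hs1 : 1 < s := by rw [hs, lt_one_div one_pos ht]; simpa using h
    have hc1 : (1 : ℤ) ≤ ⌈s⌉ := by exact_mod_cast Int.one_le_ceil_iff.2 hsp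
    have hcp : (0:ℝ) < (⌈s⌉ : ℝ) := by exact_mod_cast hc1
    have hcs : s ≤ (⌈s⌉ : ℝ) := Int.le_ceil s
    have hc2s : (⌈s⌉ : ℝ) ≤ 2 * s := by
      have h1 : (1:ℝ) ≤ (⌈s⌉:ℝ) := by exact_mod_cast hc1
      have := Int.ceil_lt_add_one s
      linarith
    have hts : t = 1 / s := by rw [hs]; field_simp
    refine ⟨⟨⌈s⌉.toNat, by omega, Or.inr (by congr 1; norm_cast; omega)⟩, ?_, ?_⟩
    · have h2 : 1 / (2*s) ≤ 1 / (⌈s⌉:ℝ) := one_div_le_one_div_of_le hcp hc2s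
      have : t / 2 = 1 / (2*s) := by rw [hts]; ring
      linarith
    · have h2 : 1 / (⌈s⌉:ℝ) ≤ 1 / s := one_div_le_one_div_of_le hsp hcs
      linarith [hts ▸ h2]

lemma tplus_spec {t : ℝ} (ht : 0 < t) :
    tplus t ∈ Zset ∧ t ≤ tplus t ∧ tplus t ≤ 2 * t := by
  unfold tplus
  by_cases h : 1 ≤ t
  · rw [if_pos h]
    have hc1 : (1 : ℤ) ≤ ⌈t⌉ := by exact_mod_cast Int.one_le_ceil_iff.2 ht
    have hcs : t ≤ (⌈t⌉ : ℝ) := Int.le_ceil t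
    have := Int.ceil_lt_add_one t
    exact ⟨⟨⌈t⌉.toNat, by omega, Or.inl (by norm_cast; omega)⟩, hcs, by linarith⟩
  · rw [if_neg h]
    push_neg at h
    set s := 1 / t with hs
    have hsp : 0 < s := by positivity
    have hs1 : 1 < s := by rw [hs, lt_one_div one_pos ht]; simpa using h
    have hf1 : (1 : ℤ) ≤ ⌊s⌋ := by exact_mod_cast Int.le_floor.2 (by exact_mod_cast hs1.le)
    have hfp : (0:ℝ) < (⌊s⌋ : ℝ) := by exact_mod_cast hf1
    have hfs : (⌊s⌋ : ℝ) ≤ s := Int.floor_le s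
    have h2f : s ≤ 2 * (⌊s⌋ : ℝ) := by
      have h1 : (1:ℝ) ≤ (⌊s⌋:ℝ) := by exact_mod_cast hf1
      have := Int.lt_floor_add_one s
      linarith
    have hts : t = 1 / s := by rw [hs]; field_simp
    refine ⟨⟨⌊s⌋.toNat, by omega, Or.inr (by congr 1; norm_cast; omega)⟩, ?_, ?_⟩
    · have h2 : 1 / s ≤ 1 / (⌊s⌋:ℝ) := one_div_le_one_div_of_le hfp hfs
      linarith [hts ▸ h2]
    · have h2 : 1 / (⌊s⌋:ℝ) ≤ 1 / (s/2) := one_div_le_one_div_of_le (by positivity) (by linarith)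
      have : 2 * t = 1 / (s/2) := by rw [hts]; ring
      linarith

universe uS9

lemma stmt9_rank_lt_omega1 {B : Type uS9} [Countable B] {rB : B → B → Prop}
    (h : WellFounded rB) (b : B) : (h.apply b).rank < (Cardinal.aleph 1).ord := by
  induction b using h.induction with
  | _ b IH =>
    rw [Acc.rank_eq]
    rw [Cardinal.ord_aleph]
    apply Ordinal.iSup_lt_omega_one
    rintro ⟨c, hc⟩
    rw [← Cardinal.ord_aleph]
    exact (Cardinal.isSuccLimit_ord (Cardinal.aleph0_le_aleph 1)).succ_lt (IH c hc)

lemma stmt9_relRankOn_lt_omega1_of_hom {A B : Type uS9} [Countable B] {S : Set A}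
    {rA : A → A → Prop} {rB : B → B → Prop} (h' : WellFounded rB)
    (f : ↥S → B) (hf : ∀ p q : ↥S, rA p q → rB (f p) (f q)) :
    ∃ hwf : WellFounded (fun p q : ↥S => rA p.1 q.1),
      relRankOn rA S hwf < (Cardinal.aleph 1).ord := by
  have hwf : WellFounded (fun p q : ↥S => rA p.1 q.1) :=
    Subrelation.wf (fun {p q} hpq => hf p q hpq) (InvImage.wf f h')
  refine ⟨hwf, ?_⟩
  have key : ∀ p : ↥S, (hwf.apply p).rank ≤ (h'.apply (f p)).rank := by
    intro p
    induction p using hwf.induction with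
    | _ p IH =>
      rw [Acc.rank_eq]
      apply Ordinal.iSup_le
      rintro ⟨q, hq⟩
      have h1 : (h'.apply (f q)).rank < (h'.apply (f p)).rank := by
        have := Acc.rank_lt_of_rel (h'.apply (f p)) (hf q p hq)
        exact this
      exact Order.succ_le_of_lt (lt_of_le_of_lt (IH q hq) h1)
  unfold relRankOn
  have hΛ : (⨆ b : B, Order.succ (h'.apply b).rank) < (Cardinal.aleph 1).ord := by
    rw [Cardinal.ord_aleph]
    apply Ordinal.iSup_lt_omega_one
    intro b
    rw [← Cardinal.ord_aleph]
    exact (Cardinal.isSuccLimit_ord (Cardinal.aleph0_le_aleph 1)).succ_lt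
      (stmt9_rank_lt_omega1 h' b)
  refine lt_of_le_of_lt ?_ hΛ
  apply Ordinal.iSup_le
  intro p
  exact le_trans (Order.succ_le_succ (key p)) (Ordinal.le_iSup _ (f p))

lemma stmt9_exists_descending {A : Type*} {r : A → A → Prop} (h : ¬ WellFounded r) :
    ∃ a : ℕ → A, ∀ n, r (a (n+1)) (a n) := by
  classical
  have h1 : ∃ b, ¬ Acc r b := by
    by_contra hh; push_neg at hh; exact h ⟨hh⟩
  have step : ∀ b, ¬ Acc r b → ∃ c, r c b ∧ ¬ Acc r c := by
    intro b hb
    by_contra hc; push_neg at hc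
    exact hb (Acc.intro b fun c hcb => hc c hcb)
  obtain ⟨b0, hb0⟩ := h1
  let g : {b // ¬ Acc r b} → {b // ¬ Acc r b} := fun b =>
    ⟨(step b.1 b.2).choose, (step b.1 b.2).choose_spec.2⟩
  have hg : ∀ b, r (g b).1 b.1 := fun b => (step b.1 b.2).choose_spec.1
  refine ⟨fun n => (g^[n] ⟨b0, hb0⟩).1, fun n => ?_⟩
  show r (g^[n+1] ⟨b0, hb0⟩).1 (g^[n] ⟨b0, hb0⟩).1
  rw [Function.iterate_succ_apply']
  exact hg _

/-- countable node type for the comparison relation -/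
abbrev SNode : Type := ℚ × ℚ × List ℕ

section Stmt9Core
variable {X E : Type*} [MetricSpace X] [MetricSpace E]

/-- realizability predicate -/
def RP (x : ℕ → X) (e : ℕ → E) (c C : ℝ) (k : ℕ) (B : ℕ → ℕ) : Prop :=
  ∃ φ : ℕ → E, (∀ i < k, dist (φ i) (e (B i)) ≤ (2:ℝ)⁻¹ ^ k) ∧
    (∀ i < k, ∀ j < k, x i = x j → φ i = φ j) ∧
    ∀ i < k, ∀ j < k, x i ≠ x j →
      c * tminus (dist (x i) (x j)) ≤ dist (φ i) (φ j) ∧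
      dist (φ i) (φ j) ≤ C * tplus (dist (x i) (x j))

/-- the comparison relation on `SNode` -/
def SRel (x : ℕ → X) (e : ℕ → E) (a b : SNode) : Prop :=
  a.1 = b.1 ∧ a.2.1 = b.2.1 ∧ (0:ℚ) < b.1 ∧ b.1 ≤ b.2.1 ∧
  a.2.2.length = b.2.2.length + 1 ∧
  (∀ i < b.2.2.length,
    dist (e (a.2.2.getD i 0)) (e (b.2.2.getD i 0)) ≤ (2:ℝ)⁻¹ ^ b.2.2.length) ∧
  RP x e (a.1:ℝ) (a.2.1:ℝ) a.2.2.length (fun i => a.2.2.getD i 0)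

lemma half_pow_mono {n m : ℕ} (h : n ≤ m) : ((2:ℝ)⁻¹) ^ m ≤ (2:ℝ)⁻¹ ^ n :=
  pow_le_pow_of_le_one (by norm_num) (by norm_num) h

lemma half_pow_pos (n : ℕ) : (0:ℝ) < (2:ℝ)⁻¹ ^ n := by positivity

lemma half_pow_tendsto : Tendsto (fun n : ℕ => ((2:ℝ)⁻¹) ^ n) atTop (nhds 0) :=
  tendsto_pow_atTop_nhds_zero_of_lt_one (by norm_num) (by norm_num)

set_option linter.unnecessarySimpa false in
/-- A descending sequence for `SRel` yields a bi-Lipschitz embedding. -/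
lemma embedding_of_descending [CompleteSpace E] (x : ℕ → X) (e : ℕ → E)
    (hx : DenseRange x) (a : ℕ → SNode) (ha : ∀ n, SRel x e (a (n+1)) (a n)) :
    ∃ f : X → E, BiLipschitzEmbeddingMap f := by
  classical
  set cq : ℚ := (a 0).1 with hcq
  set Cq : ℚ := (a 0).2.1 with hCq
  have hconst : ∀ n, (a n).1 = cq ∧ (a n).2.1 = Cq := by
    intro n; induction n with
    | zero => exact ⟨rfl, rfl⟩
    | succ n ih => exact ⟨(ha n).1.trans ih.1, (ha n).2.1.trans ih.2⟩
  have hcpos : (0:ℚ) < cq := (ha 0).2.2.1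
  have hcC : cq ≤ Cq := (ha 0).2.2.2.1
  have hcposR : (0:ℝ) < (cq:ℝ) := by exact_mod_cast hcpos
  have hCposR : (0:ℝ) < (Cq:ℝ) := lt_of_lt_of_le hcposR (by exact_mod_cast hcC)
  set k : ℕ → ℕ := fun n => (a n).2.2.length with hk
  have hksucc : ∀ n, k (n+1) = k n + 1 := fun n => (ha n).2.2.2.2.1
  have hkadd : ∀ n m, k (n + m) = k n + m := by
    intro n m
    induction m with
    | zero => rfl
    | succ m ih => have h1 := hksucc (n + m); rw [show n + (m+1) = n + m + 1 from rfl, h1]; omega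
  have hkmono : ∀ {n m}, n ≤ m → k n ≤ k m := by
    intro n m h
    obtain ⟨d, rfl⟩ := Nat.exists_eq_add_of_le h
    rw [hkadd]; omega
  have hkge : ∀ n, n ≤ k n := by
    intro n
    have := hkadd 0 n
    simp only [Nat.zero_add] at this
    omega
  set B : ℕ → ℕ → ℕ := fun n i => (a n).2.2.getD i 0 with hB
  set u : ℕ → ℕ → E := fun n i => e (B n i) with hu
  have hstep : ∀ n, ∀ i < k n, dist (u (n+1) i) (u n i) ≤ (2:ℝ)⁻¹ ^ (k n) :=
    fun n => (ha n).2.2.2.2.2.1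
  have hreal : ∀ n, RP x e (cq:ℝ) (Cq:ℝ) (k (n+1)) (B (n+1)) := by
    intro n
    have := (ha n).2.2.2.2.2.2
    rwa [(hconst (n+1)).1, (hconst (n+1)).2] at this
  -- chain bound
  have hchain : ∀ i n m, n ≤ m → i < k n →
      dist (u n i) (u m i) ≤ 2 * ((2:ℝ)⁻¹ ^ (k n) - (2:ℝ)⁻¹ ^ (k m)) := by
    intro i n m hnm hi
    induction m, hnm using Nat.le_induction with
    | base => simp
    | succ m hnm ih =>
      have h1 := hstep m i (lt_of_lt_of_le hi (hkmono hnm))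
      have h2 : dist (u n i) (u (m+1) i) ≤ dist (u n i) (u m i) + dist (u (m+1) i) (u m i) := by
        rw [dist_comm (u (m+1) i)]; exact dist_triangle _ _ _
      have h3 : (2:ℝ)⁻¹ ^ (k (m+1)) = (2:ℝ)⁻¹ ^ (k m) * 2⁻¹ := by rw [hksucc m, pow_succ]
      linarith [ih]
  have hchain' : ∀ i n m, n ≤ m → i < k n →
      dist (u n i) (u m i) ≤ 2 * (2:ℝ)⁻¹ ^ (k n) := by
    intro i n m hnm hi
    have := hchain i n m hnm hi
    have := half_pow_pos (k m)
    linarith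
  -- limit points ψ
  have hcauchy : ∀ i : ℕ, CauchySeq (fun n => u (n + i + 1) i) := by
    intro i
    apply cauchySeq_of_le_tendsto_0 (fun N => 2 * (2:ℝ)⁻¹ ^ N)
    · intro n m N hn hm
      wlog hnm : n ≤ m generalizing n m
      · rw [dist_comm]; exact this m n hm hn (le_of_not_ge hnm)
      have hik : i < k (n + i + 1) := lt_of_lt_of_le (by omega) (hkge _)
      calc dist (u (n+i+1) i) (u (m+i+1) i) ≤ 2 * (2:ℝ)⁻¹ ^ (k (n+i+1)) :=
            hchain' i _ _ (by omega) hik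
        _ ≤ 2 * (2:ℝ)⁻¹ ^ N := by
            have := half_pow_mono (le_trans hn (le_trans (Nat.le_add_right n (i+1))
              (hkge (n+i+1))))
            linarith
    · simpa using half_pow_tendsto.const_mul 2
  have hψ : ∀ i : ℕ, ∃ z : E, Tendsto (fun n => u (n + i + 1) i) atTop (nhds z) :=
    fun i => cauchySeq_tendsto_of_complete (hcauchy i)
  choose ψ hψ using hψ
  -- tail estimate
  have htail : ∀ i m, i < k m → dist (u m i) (ψ i) ≤ 2 * (2:ℝ)⁻¹ ^ (k m) := by
    intro i m him
    have h1 : Tendsto (fun n => dist (u m i) (u (n + i + 1) i)) atTop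
        (nhds (dist (u m i) (ψ i))) := tendsto_const_nhds.dist (hψ i)
    apply le_of_tendsto h1
    filter_upwards [eventually_ge_atTop m] with n hn
    exact hchain' i m (n+i+1) (by omega) him
  -- realizations and their limits
  choose φ hφ1 hφ2 hφ3 using hreal
  have hφψ : ∀ i n, i < k (n+1) → dist (φ n i) (ψ i) ≤ 3 * (2:ℝ)⁻¹ ^ (k (n+1)) := by
    intro i n hi
    have h1 := hφ1 n i hi
    have h2 := htail i (n+1) hi
    calc dist (φ n i) (ψ i) ≤ dist (φ n i) (u (n+1) i) + dist (u (n+1) i) (ψ i) :=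
          dist_triangle _ _ _
      _ ≤ 3 * (2:ℝ)⁻¹ ^ (k (n+1)) := by linarith
  have hφlim : ∀ i, Tendsto (fun n => φ n i) atTop (nhds (ψ i)) := by
    intro i
    rw [tendsto_iff_dist_tendsto_zero]
    apply squeeze_zero' (Eventually.of_forall fun n => dist_nonneg)
      (g := fun n => 3 * (2:ℝ)⁻¹ ^ (n+1))
    · filter_upwards [eventually_ge_atTop i] with n hn
      have hik : i < k (n+1) := lt_of_lt_of_le (by omega) (hkge (n+1))
      exact le_trans (hφψ i n hik) (by
        have := half_pow_mono (hkge (n+1))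
        linarith)
    · have : Tendsto (fun n : ℕ => 3 * (2:ℝ)⁻¹ ^ (n+1)) atTop (nhds (3 * 0)) :=
        ((half_pow_tendsto.comp (tendsto_add_atTop_nat 1))).const_mul 3
      simpa using this
  have hdlim : ∀ i j, Tendsto (fun n => dist (φ n i) (φ n j)) atTop
      (nhds (dist (ψ i) (ψ j))) := fun i j => (hφlim i).dist (hφlim j)
  -- constraints on ψ
  have hψeq : ∀ i j, x i = x j → ψ i = ψ j := by
    intro i j hij
    have h0 : Tendsto (fun _ : ℕ => (0:ℝ)) atTop (nhds 0) := tendsto_const_nhds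
    have : dist (ψ i) (ψ j) = 0 := by
      refine tendsto_nhds_unique ((hdlim i j).congr' ?_) h0
      filter_upwards [eventually_ge_atTop (max i j)] with n hn
      have hik : i < k (n+1) := lt_of_lt_of_le (by omega) (hkge (n+1))
      have hjk : j < k (n+1) := lt_of_lt_of_le (by omega) (hkge (n+1))
      rw [hφ2 n i hik j hjk hij, dist_self]
    exact dist_eq_zero.1 this
  have hψbd : ∀ i j, x i ≠ x j →
      (cq:ℝ) * tminus (dist (x i) (x j)) ≤ dist (ψ i) (ψ j) ∧
      dist (ψ i) (ψ j) ≤ (Cq:ℝ) * tplus (dist (x i) (x j)) := by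
    intro i j hij
    constructor
    · apply ge_of_tendsto (hdlim i j)
      filter_upwards [eventually_ge_atTop (max i j)] with n hn
      have hik : i < k (n+1) := lt_of_lt_of_le (by omega) (hkge (n+1))
      have hjk : j < k (n+1) := lt_of_lt_of_le (by omega) (hkge (n+1))
      exact (hφ3 n i hik j hjk hij).1
    · apply le_of_tendsto (hdlim i j)
      filter_upwards [eventually_ge_atTop (max i j)] with n hn
      have hik : i < k (n+1) := lt_of_lt_of_le (by omega) (hkge (n+1))
      have hjk : j < k (n+1) := lt_of_lt_of_le (by omega) (hkge (n+1))
      exact (hφ3 n i hik j hjk hij).2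
  have hψlow : ∀ i j, (cq:ℝ)/2 * dist (x i) (x j) ≤ dist (ψ i) (ψ j) := by
    intro i j
    by_cases hij : x i = x j
    · rw [hψeq i j hij, hij, dist_self, dist_self]; simp
    · have ht : 0 < dist (x i) (x j) := dist_pos.2 hij
      have h1 := (tminus_spec ht).2.1
      have h2 := (hψbd i j hij).1
      nlinarith
  have hψup : ∀ i j, dist (ψ i) (ψ j) ≤ 2 * (Cq:ℝ) * dist (x i) (x j) := by
    intro i j
    by_cases hij : x i = x j
    · rw [hψeq i j hij, hij, dist_self, dist_self]; simp
    · have ht : 0 < dist (x i) (x j) := dist_pos.2 hij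
      have h1 := (tplus_spec ht).2.2
      have h2 := (hψbd i j hij).2
      nlinarith
  -- extend to X
  have happ : ∀ (p : X) (n : ℕ), ∃ i, dist (x i) p < (2:ℝ)⁻¹ ^ n := by
    intro p n
    obtain ⟨i, hi⟩ := Metric.denseRange_iff.1 hx p _ (half_pow_pos n)
    exact ⟨i, by rwa [dist_comm]⟩
  choose idx hidx using happ
  have hwCauchy : ∀ p : X, CauchySeq (fun n => ψ (idx p n)) := by
    intro p
    apply cauchySeq_of_le_tendsto_0 (fun N => 2 * (Cq:ℝ) * (2 * (2:ℝ)⁻¹ ^ N))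
    · intro n m N hn hm
      have h1 : dist (x (idx p n)) (x (idx p m)) ≤ (2:ℝ)⁻¹ ^ n + (2:ℝ)⁻¹ ^ m :=
        le_trans (dist_triangle _ p _) (by
          have := hidx p n; have := hidx p m; rw [dist_comm p]; linarith)
      have h2 := hψup (idx p n) (idx p m)
      have h3 := half_pow_mono hn
      have h4 := half_pow_mono hm
      nlinarith
    · have : Tendsto (fun N : ℕ => 2 * (Cq:ℝ) * (2 * (2:ℝ)⁻¹ ^ N)) atTop
          (nhds (2 * (Cq:ℝ) * (2 * 0))) := (half_pow_tendsto.const_mul 2).const_mul _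
      simpa using this
  have hf : ∀ p : X, ∃ z : E, Tendsto (fun n => ψ (idx p n)) atTop (nhds z) :=
    fun p => cauchySeq_tendsto_of_complete (hwCauchy p)
  choose f hf using hf
  have hxlim : ∀ p : X, Tendsto (fun n => x (idx p n)) atTop (nhds p) := by
    intro p
    rw [tendsto_iff_dist_tendsto_zero]
    exact squeeze_zero (fun n => dist_nonneg) (fun n => (hidx p n).le) half_pow_tendsto
  refine ⟨f, (cq:ℝ)/2, 2 * (Cq:ℝ), by positivity, by
    have hcCR : (cq:ℝ) ≤ (Cq:ℝ) := by exact_mod_cast hcC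
    linarith, ?_⟩
  intro p q
  have hdw : Tendsto (fun n => dist (ψ (idx p n)) (ψ (idx q n))) atTop
      (nhds (dist (f p) (f q))) := (hf p).dist (hf q)
  have hdx : Tendsto (fun n => dist (x (idx p n)) (x (idx q n))) atTop
      (nhds (dist p q)) := (hxlim p).dist (hxlim q)
  constructor
  · have := le_of_tendsto_of_tendsto' (hdx.const_mul ((cq:ℝ)/2)) hdw
      (fun n => hψlow (idx p n) (idx q n))
    simpa using this
  · have := le_of_tendsto_of_tendsto' hdw (hdx.const_mul (2 * (Cq:ℝ)))
      (fun n => hψup (idx p n) (idx q n))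
    simpa using this

end Stmt9Core

end Stmt9Aux


theorem stmt9 {X E : Type*} [MetricSpace X] [MetricSpace E]
    [TopologicalSpace.SeparableSpace X] [CompleteSpace X]
    [TopologicalSpace.SeparableSpace E] [CompleteSpace E]
    (x : ℕ → X) (hx : DenseRange x) :
    (∃ f : X → E, BiLipschitzEmbeddingMap f) ∨
      ∃ hwf : WellFounded fun p q : ↥(LipSet (E := E) x) => QuadRel p.1 q.1,
        relRankOn QuadRel (LipSet (E := E) x) hwf < (Cardinal.aleph 1).ord := by
  classical
  by_cases hP : ∃ f : X → E, BiLipschitzEmbeddingMap f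
  · exact Or.inl hP
  right
  cases isEmpty_or_nonempty E with
  | inl hE =>
    have hwf : WellFounded fun p q : ↥(LipSet (E := E) x) => QuadRel p.1 q.1 :=
      ⟨fun a => (hE.false (a.1.phi 0)).elim⟩
    refine ⟨hwf, ?_⟩
    have hempty : IsEmpty ↥(LipSet (E := E) x) := ⟨fun a => hE.false (a.1.phi 0)⟩
    unfold relRankOn
    rw [ciSup_of_empty, Ordinal.bot_eq_zero]
    exact (Cardinal.isSuccLimit_ord (Cardinal.aleph0_le_aleph 1)).pos
  | inr hEne =>
    obtain ⟨e, he⟩ := TopologicalSpace.exists_dense_seq E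
    have hwfS : WellFounded (SRel (X := X) (E := E) x e) := by
      by_contra hwfc
      obtain ⟨a, ha⟩ := stmt9_exists_descending hwfc
      exact hP (embedding_of_descending x e hx a ha)
    have hcent : ∀ (z : E) (m : ℕ), ∃ i, dist (e i) z ≤ (2:ℝ)⁻¹ ^ m := by
      intro z m
      obtain ⟨i, hi⟩ := Metric.denseRange_iff.1 he z _ (half_pow_pos m)
      exact ⟨i, by rw [dist_comm]; exact hi.le⟩
    choose cent hcent using hcent
    have hpick : ∀ κ ω : ℝ → ℝ≥0∞, MLipschitz κ ω → ∃ p : ℚ × ℚ,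
        0 < p.1 ∧ p.1 ≤ p.2 ∧ ∀ r ∈ Zset,
          ENNReal.ofReal (p.1 * r) ≤ κ r ∧ ω r ≤ ENNReal.ofReal (p.2 * r) := by
      rintro κ ω ⟨c, C, hc, hcC, hb⟩
      obtain ⟨c', hc'⟩ := exists_rat_btwn hc
      obtain ⟨C', hC'⟩ := exists_rat_gt C
      refine ⟨(c', C'), by exact_mod_cast hc'.1, ?_, ?_⟩
      · have h1 : (c':ℝ) ≤ (C':ℝ) := by linarith [hc'.2]
        exact_mod_cast h1
      · intro r hr
        have hrpos := Zset_pos hr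
        constructor
        · exact le_trans (ENNReal.ofReal_le_ofReal
            (mul_le_mul_of_nonneg_right hc'.2.le hrpos.le)) (hb r hr).1
        · exact le_trans (hb r hr).2 (ENNReal.ofReal_le_ofReal
            (mul_le_mul_of_nonneg_right (by linarith [hC']) hrpos.le))
    choose pc hpc1 hpc2 hpc3 using hpick
    have hpcCongr : ∀ (κ κ' ω ω' : ℝ → ℝ≥0∞) (h : MLipschitz κ ω) (h' : MLipschitz κ' ω'),
        κ = κ' → ω = ω' → pc κ ω h = pc κ' ω' h' := by
      rintro κ κ' ω ω' h h' rfl rfl; rfl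
    have hgetD : ∀ (f : ℕ → ℕ) (k i : ℕ), i < k → ((List.range k).map f).getD i 0 = f i := by
      intro f k i hik
      have hlen : i < ((List.range k).map f).length := by simpa using hik
      rw [List.getD_eq_getElem?_getD, List.getElem?_eq_getElem hlen]
      simp
    refine stmt9_relRankOn_lt_omega1_of_hom
      (rB := fun p q : ULift SNode => SRel x e p.down q.down)
      (InvImage.wf ULift.down hwfS)
      (fun q => ULift.up ((pc q.1.kappa q.1.omega q.2.2).1, (pc q.1.kappa q.1.omega q.2.2).2,
        (List.range q.1.k).map fun i => cent (q.1.phi i) (q.1.k + 1))) ?_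
    rintro p q ⟨h1, h2, h3, h4⟩
    have hpcEq := hpcCongr p.1.kappa q.1.kappa p.1.omega q.1.omega p.2.2 q.2.2 h1 h2
    show SRel x e
      ((pc p.1.kappa p.1.omega p.2.2).1, (pc p.1.kappa p.1.omega p.2.2).2,
        (List.range p.1.k).map fun i => cent (p.1.phi i) (p.1.k + 1))
      ((pc q.1.kappa q.1.omega q.2.2).1, (pc q.1.kappa q.1.omega q.2.2).2,
        (List.range q.1.k).map fun i => cent (q.1.phi i) (q.1.k + 1))
    refine ⟨by rw [hpcEq], by rw [hpcEq], hpc1 _ _ q.2.2, hpc2 _ _ q.2.2,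
      by simp [h3], ?_, ?_⟩
    · -- center chain condition
      intro i hi
      simp only [List.length_map, List.length_range] at hi ⊢
      rw [hgetD _ _ _ (by omega : i < p.1.k), hgetD _ _ _ hi]
      rw [h4 i hi]
      set z := q.1.phi i with hz
      have hA := half_pow_pos q.1.k
      calc dist (e (cent z (p.1.k + 1))) (e (cent z (q.1.k + 1)))
          ≤ dist (e (cent z (p.1.k + 1))) z + dist z (e (cent z (q.1.k + 1))) :=
            dist_triangle _ _ _
        _ ≤ (2:ℝ)⁻¹ ^ (p.1.k + 1) + (2:ℝ)⁻¹ ^ (q.1.k + 1) := by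
            have ha1 := hcent z (p.1.k + 1)
            have ha2 := hcent z (q.1.k + 1)
            rw [dist_comm z]
            linarith
        _ ≤ (2:ℝ)⁻¹ ^ q.1.k := by
            rw [h3]
            rw [show q.1.k + 1 + 1 = q.1.k + 2 from rfl, pow_succ, pow_succ]
            linarith
    · -- realizability of the new node
      simp only [List.length_map, List.length_range]
      refine ⟨p.1.phi, ?_, ?_, ?_⟩
      · intro i hi
        beta_reduce
        rw [hgetD _ _ _ hi, dist_comm]
        exact le_trans (hcent _ _) (half_pow_mono (Nat.le_succ _))
      · intro i _ j _ hxij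
        exact p.2.1.2.2.1 i j hxij
      · intro i hi j hj hne
        have ht : 0 < dist (x i) (x j) := dist_pos.2 hne
        have hcon := p.2.1.2.2.2 i hi j hj hne
        obtain ⟨hz1, htm1, htm2⟩ := tminus_spec ht
        obtain ⟨hz2, htp1, htp2⟩ := tplus_spec ht
        have hb := hpc3 p.1.kappa p.1.omega p.2.2
        rw [edist_dist] at hcon
        constructor
        · have h5 := le_trans (hb _ hz1).1 hcon.1
          exact (ENNReal.ofReal_le_ofReal_iff dist_nonneg).1 h5
        · have h5 := le_trans hcon.2 (hb _ hz2).2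
          refine (ENNReal.ofReal_le_ofReal_iff ?_).1 h5
          have hcp := hpc1 p.1.kappa p.1.omega p.2.2
          have hcC2 := hpc2 p.1.kappa p.1.omega p.2.2
          have hCpos : (0:ℝ) < ((pc p.1.kappa p.1.omega p.2.2).2 : ℝ) := by
            exact_mod_cast lt_of_lt_of_le hcp hcC2
          nlinarith
end

section
/- Let (e_n) be a basic sequence in a real Banach space X, let R be ℤ or ℚ, and let E be a metric space. The relation < is ill-founded on Coa(R,(e_n),E) if and only if there is an infinite subsequence e_{n₁}, e_{n₂}, e_{n₃}, … such that R[e_{n₁},e_{n₂},…] (the set of finite R-linear combinations of the e_{n_k}, with the norm-induced metric) coarsely embeds into E. -/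
open Filter Set Topology
open scoped ENNReal

/-! ### Auxiliary lemmas -/

section AuxLemmas

lemma zset_pos' {r : ℝ} (h : r ∈ Zset) : 0 < r := by
  obtain ⟨n, hn, h | h⟩ := h <;> subst h <;>
    · have : (0:ℝ) < n := by exact_mod_cast hn
      positivity

lemma zset_subset_Ici' : Zset ⊆ Set.Ici (0:ℝ) := fun _ hr => (zset_pos' hr).le

lemma tminus_nonneg' {t : ℝ} (ht : 0 < t) : 0 ≤ tminus t := by
  unfold tminus
  split_ifs with h
  · exact_mod_cast Int.floor_nonneg.mpr (by linarith)
  · positivity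

lemma tminus_le' {t : ℝ} (ht : 0 < t) : tminus t ≤ t := by
  unfold tminus
  split_ifs with h
  · exact Int.floor_le t
  · have h1t : 1 < 1 / t := (one_lt_one_div ht (lt_of_not_ge h))
    have hc : (1:ℝ) / t ≤ (⌈1/t⌉ : ℝ) := Int.le_ceil _
    have hpos : 0 < (1:ℝ)/t := by positivity
    calc 1 / (⌈1/t⌉ : ℝ) ≤ 1 / (1/t) := by
          apply one_div_le_one_div_of_le hpos hc
      _ = t := one_div_one_div t

lemma tminus_mem_of_one_le' {t : ℝ} (ht : 1 ≤ t) : tminus t ∈ Zset := by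
  have h1 : (1:ℤ) ≤ ⌊t⌋ := Int.le_floor.mpr (by exact_mod_cast ht)
  refine ⟨⌊t⌋.toNat, by omega, Or.inl ?_⟩
  unfold tminus
  rw [if_pos ht]
  exact_mod_cast (Int.toNat_of_nonneg (show (0:ℤ) ≤ ⌊t⌋ by omega)).symm

lemma tminus_mono_of_one_le' {s t : ℝ} (hs : 1 ≤ s) (hst : s ≤ t) :
    tminus s ≤ tminus t := by
  unfold tminus
  rw [if_pos hs, if_pos (hs.trans hst)]
  exact_mod_cast Int.floor_le_floor hst

lemma tplus_ge' {t : ℝ} (ht : 0 < t) : t ≤ tplus t := by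
  unfold tplus
  split_ifs with h
  · exact Int.le_ceil t
  · have h1t : 1 < 1 / t := (one_lt_one_div ht (lt_of_not_ge h))
    have hf : (1:ℝ) ≤ (⌊1/t⌋ : ℝ) := by exact_mod_cast Int.le_floor.mpr (by exact_mod_cast h1t.le)
    have hfl : (⌊1/t⌋ : ℝ) ≤ 1 / t := Int.floor_le _
    calc t = 1 / (1/t) := (one_div_one_div t).symm
      _ ≤ 1 / (⌊1/t⌋ : ℝ) := one_div_le_one_div_of_le (by linarith) hfl

lemma tplus_mem' {t : ℝ} (ht : 0 < t) : tplus t ∈ Zset := by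
  unfold tplus
  split_ifs with h
  · have h1 : (1:ℤ) ≤ ⌈t⌉ := Int.ceil_pos.mpr (by linarith)
    refine ⟨(⌈t⌉).toNat, by omega, Or.inl ?_⟩
    exact_mod_cast (Int.toNat_of_nonneg (show (0:ℤ) ≤ ⌈t⌉ by omega)).symm
  · have h1t : 1 < 1 / t := (one_lt_one_div ht (lt_of_not_ge h))
    have h1 : (1:ℤ) ≤ ⌊1/t⌋ := Int.le_floor.mpr (by exact_mod_cast h1t.le)
    refine ⟨(⌊1/t⌋).toNat, by omega, Or.inr ?_⟩
    congr 1
    exact_mod_cast (Int.toNat_of_nonneg (show (0:ℤ) ≤ ⌊1/t⌋ by omega)).symm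

lemma tplus_mono' {s t : ℝ} (hs : 0 < s) (hst : s ≤ t) : tplus s ≤ tplus t := by
  unfold tplus
  by_cases h1 : 1 ≤ s
  · rw [if_pos h1, if_pos (h1.trans hst)]
    exact_mod_cast Int.ceil_le_ceil hst
  · rw [if_neg h1]
    have h1s : 1 < 1 / s := one_lt_one_div hs (lt_of_not_ge h1)
    have hfs : (1:ℝ) ≤ (⌊1/s⌋ : ℝ) := by exact_mod_cast Int.le_floor.mpr (by exact_mod_cast h1s.le)
    by_cases h2 : 1 ≤ t
    · rw [if_pos h2]
      have h3 : 1 / (⌊1/s⌋:ℝ) ≤ 1 := by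
        rw [div_le_one (by linarith)]; exact hfs
      have hc : (1:ℝ) ≤ ((⌈t⌉:ℤ):ℝ) := by
        exact_mod_cast Int.ceil_pos.mpr (by linarith)
      linarith
    · rw [if_neg h2]
      have ht : 0 < t := hs.trans_le hst
      have h1t : 1 < 1 / t := one_lt_one_div ht (lt_of_not_ge h2)
      have hft : (1:ℝ) ≤ (⌊1/t⌋ : ℝ) := by exact_mod_cast Int.le_floor.mpr (by exact_mod_cast h1t.le)
      have h4 : (⌊1/t⌋:ℝ) ≤ (⌊1/s⌋:ℝ) := by
        exact_mod_cast Int.floor_le_floor (one_div_le_one_div_of_le hs hst)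
      exact one_div_le_one_div_of_le (by linarith) h4

lemma zero_mem_R' {R : Set ℝ} (hR : R = ZR ∨ R = QR) : (0:ℝ) ∈ R := by
  rcases hR with h | h <;> subst h
  · exact ⟨0, by norm_num⟩
  · exact ⟨0, by norm_num⟩

lemma RComb_mono' {X : Type*} [NormedAddCommGroup X] [Module ℝ X] {R : Set ℝ}
    (h0 : (0:ℝ) ∈ R) (e : ℕ → X) {A B : Finset ℕ} (hAB : A ⊆ B) :
    RComb R e A ⊆ RComb R e B := by
  rintro x ⟨c, hc, rfl⟩
  refine ⟨fun i => if i ∈ A then c i else 0, fun i => ?_, ?_⟩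
  · by_cases hi : i ∈ A
    · simpa [hi] using hc i
    · simpa [hi] using h0
  · rw [← Finset.sum_subset hAB (fun i _ hi => by simp [hi])]
    exact Finset.sum_congr rfl fun i hi => by simp [hi]

lemma RComb_image' {X : Type*} [NormedAddCommGroup X] [Module ℝ X] {R : Set ℝ}
    (e : ℕ → X) {n : ℕ → ℕ} (hn : Function.Injective n) (s : Finset ℕ) {x : X} :
    x ∈ RComb R (fun j => e (n j)) s ↔ x ∈ RComb R e (Finset.image n s) := by
  constructor
  · rintro ⟨c, hc, rfl⟩
    refine ⟨fun i => c (Function.invFun n i), fun i => hc _, ?_⟩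
    rw [Finset.sum_image (fun a _ b _ h => hn h)]
    exact Finset.sum_congr rfl fun j _ => by
      simp only []
      rw [Function.leftInverse_invFun hn j]
  · rintro ⟨c, hc, rfl⟩
    refine ⟨fun j => c (n j), fun j => hc _, ?_⟩
    rw [Finset.sum_image (fun a _ b _ h => hn h)]

end AuxLemmas

theorem stmt10 {X E : Type*} [NormedAddCommGroup X] [NormedSpace ℝ X] [CompleteSpace X]
    [MetricSpace E] (e : ℕ → X) (he : IsBasicSequence e)
    (R : Set ℝ) (hR : R = ZR ∨ R = QR) :
    IllFoundedOn (QuadFRel (E := E) R e) (CoaTheta (E := E) R e) ↔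
      ∃ n : ℕ → ℕ, StrictMono n ∧
        ∃ f : ↥(RCombAll R fun k => e (n k)) → E, CoarseEmbeddingMap f := by
  constructor
  · -- Forward: ill-founded chain gives a coarse embedding of a subsequence span
    rintro ⟨a, hmem, hrel⟩
    have h0R : (0:ℝ) ∈ R := zero_mem_R' hR
    set κ0 := (a 0).kappa with hκ0
    set ω0 := (a 0).omega with hω0
    have hk : ∀ k, (a k).kappa = κ0 ∧ (a k).omega = ω0 := by
      intro k
      induction k with
      | zero => exact ⟨rfl, rfl⟩
      | succ k ih => exact ⟨(hrel k).1.trans ih.1, (hrel k).2.1.trans ih.2⟩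
    choose m hm1 hm2 using fun k => (hrel k).2.2.1
    have hm_mem : ∀ k, m k ∈ (a (k+1)).A := fun k => by
      rw [hm2 k]; exact Finset.mem_insert_self _ _
    have hA_mono : ∀ {j k : ℕ}, j ≤ k → (a j).A ⊆ (a k).A := by
      intro j k h
      induction k, h using Nat.le_induction with
      | base => exact subset_rfl
      | succ k hjk ih =>
        refine ih.trans ?_
        rw [hm2 k]
        exact Finset.subset_insert _ _
    have hm_strict : StrictMono m :=
      strictMono_nat_of_lt_succ fun k => hm1 (k+1) _ (hm_mem k)
    have hstab : ∀ j k, j ≤ k → ∀ x : X, x ∈ RComb R e ((a j).A) →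
        (a k).phi x = (a j).phi x := by
      intro j k h x hx
      induction k, h using Nat.le_induction with
      | base => rfl
      | succ k hjk ih =>
        rw [← ih]
        exact (hrel k).2.2.2 x (RComb_mono' h0R e (hA_mono hjk) hx)
    have hKx : ∀ x ∈ RCombAll R (fun j => e (m j)), ∃ K, x ∈ RComb R e ((a K).A) := by
      intro x hx
      obtain ⟨S, hS⟩ := Set.mem_iUnion.mp hx
      have hsub : S ⊆ Finset.range (S.sup id + 1) := fun i hi =>
        Finset.mem_range.mpr (Nat.lt_succ_of_le (Finset.le_sup (f := id) hi))
      have h1 : x ∈ RComb R (fun j => e (m j)) (Finset.range (S.sup id + 1)) :=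
        RComb_mono' h0R _ hsub hS
      have h2 : x ∈ RComb R e (Finset.image m (Finset.range (S.sup id + 1))) :=
        (RComb_image' e hm_strict.injective _).mp h1
      refine ⟨S.sup id + 1, RComb_mono' h0R e ?_ h2⟩
      intro b hb
      obtain ⟨j, hj, rfl⟩ := Finset.mem_image.mp hb
      exact hA_mono (Finset.mem_range.mp hj) (hm_mem j)
    have hJ : ∀ x : ↥(RCombAll R fun j => e (m j)),
        (x : X) ∈ RComb R e ((a (hKx x x.2).choose).A) :=
      fun x => (hKx x x.2).choose_spec
    set f : ↥(RCombAll R fun j => e (m j)) → E :=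
      fun x => (a (hKx x x.2).choose).phi x with hfdef
    have hagree : ∀ (x : ↥(RCombAll R fun j => e (m j))) (K : ℕ),
        (x : X) ∈ RComb R e ((a K).A) → f x = (a K).phi x := by
      intro x K hxK
      have h1 : (a (max (hKx x x.2).choose K)).phi x = (a (hKx x x.2).choose).phi x :=
        hstab _ _ (le_max_left _ _) _ (hJ x)
      have h2 : (a (max (hKx x x.2).choose K)).phi x = (a K).phi x :=
        hstab _ _ (le_max_right _ _) _ hxK
      show (a (hKx x x.2).choose).phi x = (a K).phi x
      rw [← h1, h2]
    have hMc : Mcoarse κ0 ω0 := (hmem 0).2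
    have hNκ : Nmod κ0 := (hmem 0).1.1
    have hNω : Nmod ω0 := (hmem 0).1.2.1
    have hΘ : ∀ (K : ℕ), ∀ x ∈ RComb R e ((a K).A), ∀ y ∈ RComb R e ((a K).A), x ≠ y →
        κ0 (tminus (dist x y)) ≤ edist ((a K).phi x) ((a K).phi y) ∧
        edist ((a K).phi x) ((a K).phi y) ≤ ω0 (tplus (dist x y)) := by
      intro K x hx y hy hxy
      have h := (hmem K).1.2.2 x hx y hy hxy
      rwa [(hk K).1, (hk K).2] at h
    set κ₂ : ℝ → ℝ≥0∞ := fun r => min (κ0 r) (ENNReal.ofReal r) with hκ₂def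
    have hκ₂mono : MonotoneOn κ₂ Zset := fun r hr r' hr' h =>
      min_le_min (hNκ hr hr' h) (ENNReal.ofReal_le_ofReal h)
    have hκ₂ne : ∀ r, κ₂ r ≠ ⊤ := fun r =>
      ne_top_of_le_ne_top ENNReal.ofReal_ne_top (min_le_right _ _)
    have hωne : ∀ t : ℝ, 0 < t → ω0 (tplus t) ≠ ⊤ := fun t ht =>
      (hMc.1 _ (tplus_mem' ht)).ne
    refine ⟨m, hm_strict, f, fun t => if 1 ≤ t then (κ₂ (tminus t)).toReal else 0,
      fun t => if 0 < t then (ω0 (tplus t)).toReal else 0, ?_, ?_, ?_, ?_, ?_⟩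
    · intro s hs t ht h
      try dsimp only
      by_cases h1 : 1 ≤ s
      · rw [if_pos h1, if_pos (h1.trans h)]
        exact ENNReal.toReal_mono (hκ₂ne _)
          (hκ₂mono (tminus_mem_of_one_le' h1) (tminus_mem_of_one_le' (h1.trans h))
            (tminus_mono_of_one_le' h1 h))
      · rw [if_neg h1]
        split_ifs with h2
        · exact ENNReal.toReal_nonneg
        · exact le_refl 0
    · intro s hs t ht h
      try dsimp only
      by_cases h1 : 0 < s
      · rw [if_pos h1, if_pos (h1.trans_le h)]
        exact ENNReal.toReal_mono (hωne _ (h1.trans_le h))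
          (hNω (tplus_mem' h1) (tplus_mem' (h1.trans_le h)) (tplus_mono' h1 h))
      · rw [if_neg h1]
        split_ifs with h2
        · exact ENNReal.toReal_nonneg
        · exact le_refl 0
    · intro t ht
      constructor
      · try dsimp only; split_ifs <;> simp
      · try dsimp only; split_ifs <;> simp
    · have h2top : Filter.Tendsto (fun k : ℕ => κ₂ (k : ℝ)) Filter.atTop (nhds ⊤) := by
        have h2 : Filter.Tendsto (fun k : ℕ => ENNReal.ofReal (k : ℝ)) Filter.atTop (nhds ⊤) :=
          ENNReal.tendsto_ofReal_atTop.comp tendsto_natCast_atTop_atTop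
        simpa [hκ₂def] using hMc.2.min h2
      rw [Filter.tendsto_atTop]
      intro b
      have hev : ∀ᶠ k : ℕ in Filter.atTop, ENNReal.ofReal b < κ₂ (k : ℝ) :=
        h2top.eventually (eventually_gt_nhds (ENNReal.ofReal_lt_top))
      obtain ⟨N, hN⟩ := (hev.and (Filter.eventually_ge_atTop 1)).exists
      filter_upwards [Filter.eventually_ge_atTop ((N:ℝ))] with t htN
      have h1N : (1:ℝ) ≤ (N:ℝ) := by exact_mod_cast hN.2
      have h1t : 1 ≤ t := h1N.trans htN
      try dsimp only
      rw [if_pos h1t]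
      have hNfloor : (N:ℝ) ≤ tminus t := by
        unfold tminus; rw [if_pos h1t]
        exact_mod_cast Int.le_floor.mpr (by exact_mod_cast htN)
      have hNz : (N:ℝ) ∈ Zset := ⟨N, hN.2, Or.inl rfl⟩
      have hmm : κ₂ ((N:ℝ)) ≤ κ₂ (tminus t) :=
        hκ₂mono hNz (tminus_mem_of_one_le' h1t) hNfloor
      calc b ≤ max b 0 := le_max_left _ _
        _ = (ENNReal.ofReal b).toReal := ENNReal.toReal_ofReal'.symm
        _ ≤ (κ₂ (tminus t)).toReal := ENNReal.toReal_mono (hκ₂ne _) (hN.1.le.trans hmm)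
    · intro x y
      by_cases hxy : x = y
      · subst hxy
        constructor
        · try dsimp only
          rw [dist_self, dist_self, if_neg (by norm_num : ¬ (1:ℝ) ≤ 0)]
        · try dsimp only
          rw [dist_self, dist_self, if_neg (lt_irrefl (0:ℝ))]
      · have hne : (x : X) ≠ (y : X) := fun h => hxy (Subtype.ext h)
        have hdxy : dist x y = dist (x:X) (y:X) := rfl
        have hd : 0 < dist (x:X) (y:X) := dist_pos.mpr hne
        have hxK : (x:X) ∈ RComb R e
            ((a (max (hKx x x.2).choose (hKx y y.2).choose)).A) :=
          RComb_mono' h0R e (hA_mono (le_max_left _ _)) (hJ x)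
        have hyK : (y:X) ∈ RComb R e
            ((a (max (hKx x x.2).choose (hKx y y.2).choose)).A) :=
          RComb_mono' h0R e (hA_mono (le_max_right _ _)) (hJ y)
        obtain ⟨hlow, hup⟩ := hΘ _ _ hxK _ hyK hne
        have hfx : f x = (a (max (hKx x x.2).choose (hKx y y.2).choose)).phi x :=
          hagree x _ hxK
        have hfy : f y = (a (max (hKx x x.2).choose (hKx y y.2).choose)).phi y :=
          hagree y _ hyK
        have hene : edist ((a (max (hKx x x.2).choose (hKx y y.2).choose)).phi (x:X))
            ((a (max (hKx x x.2).choose (hKx y y.2).choose)).phi (y:X)) ≠ ⊤ := by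
          rw [← hfx, ← hfy]; exact edist_ne_top _ _
        constructor
        · try dsimp only
          rw [hdxy]
          split_ifs with h1
          · have h2 : κ₂ (tminus (dist (x:X) (y:X))) ≤
                edist ((a (max (hKx x x.2).choose (hKx y y.2).choose)).phi (x:X))
                  ((a (max (hKx x x.2).choose (hKx y y.2).choose)).phi (y:X)) :=
              (min_le_left _ _).trans hlow
            have h3 := ENNReal.toReal_mono hene h2
            rwa [← hfx, ← hfy, ← dist_edist] at h3
          · exact dist_nonneg
        · try dsimp only
          rw [hdxy, if_pos hd]
          have h3 := ENNReal.toReal_mono (hωne _ hd) hup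
          rwa [← hfx, ← hfy, ← dist_edist] at h3
  · -- Backward: a coarse embedding gives an infinite descending chain
    rintro ⟨n, hmono, f, κ', ω', hκm, hωm, hnn, hκtop, hest⟩
    classical
    have h0R : (0:ℝ) ∈ R := zero_mem_R' hR
    have h0mem : (0:X) ∈ RCombAll R (fun k => e (n k)) :=
      Set.mem_iUnion.mpr ⟨∅, ⟨fun _ => 0, fun _ => h0R, by simp⟩⟩
    haveI : Nonempty E := ⟨f ⟨0, h0mem⟩⟩
    refine ⟨fun k => ⟨fun r => ENNReal.ofReal (κ' r), fun r => ENNReal.ofReal (ω' r),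
      Finset.image n (Finset.range k),
      fun x => if h : x ∈ RCombAll R (fun j => e (n j)) then f ⟨x, h⟩
        else Classical.arbitrary E⟩,
      fun k => ?_, fun k => ?_⟩
    · refine ⟨⟨fun r hr r' hr' hle => ENNReal.ofReal_le_ofReal
          (hκm (zset_subset_Ici' hr) (zset_subset_Ici' hr') hle),
        fun r hr r' hr' hle => ENNReal.ofReal_le_ofReal
          (hωm (zset_subset_Ici' hr) (zset_subset_Ici' hr') hle), ?_⟩,
        fun r _ => ENNReal.ofReal_lt_top, ?_⟩
      · intro x hx y hy hxy
        have hx' : x ∈ RCombAll R (fun j => e (n j)) :=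
          Set.mem_iUnion.mpr ⟨Finset.range k, (RComb_image' e hmono.injective _).mpr hx⟩
        have hy' : y ∈ RCombAll R (fun j => e (n j)) :=
          Set.mem_iUnion.mpr ⟨Finset.range k, (RComb_image' e hmono.injective _).mpr hy⟩
        have hd : 0 < dist x y := dist_pos.mpr hxy
        have hsub : dist (⟨x, hx'⟩ : ↥(RCombAll R fun j => e (n j))) ⟨y, hy'⟩ = dist x y := rfl
        have h1 := (hest ⟨x, hx'⟩ ⟨y, hy'⟩).1
        have h2 := (hest ⟨x, hx'⟩ ⟨y, hy'⟩).2
        rw [hsub] at h1 h2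
        constructor
        · try dsimp only
          rw [edist_dist, dif_pos hx', dif_pos hy']
          exact ENNReal.ofReal_le_ofReal
            ((hκm (Set.mem_Ici.mpr (tminus_nonneg' hd)) (Set.mem_Ici.mpr dist_nonneg)
              (tminus_le' hd)).trans h1)
        · try dsimp only
          rw [edist_dist, dif_pos hx', dif_pos hy']
          exact ENNReal.ofReal_le_ofReal
            (h2.trans (hωm (Set.mem_Ici.mpr dist_nonneg)
              (Set.mem_Ici.mpr (dist_nonneg.trans (tplus_ge' hd))) (tplus_ge' hd)))
      · exact ENNReal.tendsto_ofReal_atTop.comp (hκtop.comp tendsto_natCast_atTop_atTop)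
    · refine ⟨rfl, rfl, ⟨n k, ?_, ?_⟩, fun x _ => rfl⟩
      · intro b hb
        obtain ⟨i, hi, rfl⟩ := Finset.mem_image.mp hb
        exact hmono (Finset.mem_range.mp hi)
      · show Finset.image n (Finset.range (k+1)) = insert (n k) (Finset.image n (Finset.range k))
        rw [Finset.range_add_one, Finset.image_insert]
end
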